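/- arXiv:0909.0927 — 5 statements merged into one kernel-verified Lean document; each statement's English description precedes it below -/
import Mathlib

section
/- Let V be the Heitmann–Radin sticky disc potential and let R ≥ 1 be an integer. The configuration consisting of the N = 3R² + 3R + 1 points of h̄_R ∩ L (the hexagonal subset of the triangular lattice of radius R) has energy E = −6N + 2√(12N − 3). -/
open Set
open scoped Classical

noncomputable section

abbrev E2 := EuclideanSpace ℝ (Fin 2)

/-- The Heitmann-Radin sticky disc potential: `+∞` for `r < 1`, `-1` at `r = 1`,
`0` for `r > 1`. -/
def VHR : ℝ → EReal := fun r => if r < 1 then ⊤ else if r = 1 then -1 else 0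

/-- Energy of a finite configuration (sum over ordered pairs of distinct points). -/
def energyF (V : ℝ → EReal) (S : Finset E2) : EReal :=
  ∑ x ∈ S, ∑ y ∈ S.erase x, V (dist x y)

def e1 : E2 := (WithLp.equiv 2 _).symm ![1, 0]

def e2 : E2 := (WithLp.equiv 2 _).symm ![1 / 2, Real.sqrt 3 / 2]

/-- The triangular lattice `L = {m e₁ + n e₂ : m, n ∈ ℤ}`. -/
def triLattice : Set E2 := {p | ∃ m n : ℤ, p = (m : ℝ) • e1 + (n : ℝ) • e2}

/-- The closed hexagon `h̄_R = conv {±R e₁, ±R e₂, ±R(e₂ - e₁)}`. -/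
def hex (R : ℝ) : Set E2 :=
  convexHull ℝ {R • e1, -(R • e1), R • e2, -(R • e2), R • (e2 - e1), -(R • (e2 - e1))}



lemma e1_apply : e1 0 = 1 ∧ e1 1 = 0 := by
  constructor <;> simp [e1]

lemma e2_apply : e2 0 = 1/2 ∧ e2 1 = Real.sqrt 3 / 2 := by
  constructor <;> simp [e2]

def Tlin : (ℝ × ℝ) →ₗ[ℝ] E2 where
  toFun x := x.1 • e1 + x.2 • e2
  map_add' x y := by
    simp only [Prod.fst_add, Prod.snd_add, add_smul]; abel
  map_smul' c x := by
    simp only [Prod.smul_fst, Prod.smul_snd, smul_smul, RingHom.id_apply, smul_add, smul_eq_mul]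

lemma Tlin_apply0 (x : ℝ × ℝ) : Tlin x 0 = x.1 + x.2 / 2 := by
  simp [Tlin, e1, e2]; ring

lemma Tlin_apply1 (x : ℝ × ℝ) : Tlin x 1 = x.2 * (Real.sqrt 3 / 2) := by
  simp [Tlin, e1, e2]

lemma Tlin_inj : Function.Injective Tlin := by
  rw [← LinearMap.ker_eq_bot, LinearMap.ker_eq_bot']
  intro x hx
  have h1 : Tlin x 1 = 0 := by rw [hx]; rfl
  have h0 : Tlin x 0 = 0 := by rw [hx]; rfl
  rw [Tlin_apply1] at h1
  rw [Tlin_apply0] at h0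
  have hs : Real.sqrt 3 ≠ 0 := by positivity
  have hx2 : x.2 = 0 := by
    rcases mul_eq_zero.1 h1 with h | h
    · exact h
    · exact absurd h (by positivity)
  have hx1 : x.1 = 0 := by rw [hx2] at h0; linarith
  exact Prod.ext hx1 hx2

def hexVerts (R : ℝ) : Set (ℝ × ℝ) :=
  {(R, 0), (-R, 0), (0, R), (0, -R), (-R, R), (R, -R)}

def Kreg (R : ℝ) : Set (ℝ × ℝ) := {x | |x.1| ≤ R ∧ |x.2| ≤ R ∧ |x.1 + x.2| ≤ R}

lemma Kreg_convex (R : ℝ) : Convex ℝ (Kreg R) := by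
  intro x hx y hy a b ha hb hab
  obtain ⟨h1, h2, h3⟩ := hx
  obtain ⟨g1, g2, g3⟩ := hy
  have key : ∀ u v : ℝ, |u| ≤ R → |v| ≤ R → |a * u + b * v| ≤ R := by
    intro u v hu hv
    calc |a * u + b * v| ≤ |a * u| + |b * v| := abs_add_le _ _
      _ = a * |u| + b * |v| := by rw [abs_mul, abs_mul, abs_of_nonneg ha, abs_of_nonneg hb]
      _ ≤ a * R + b * R := by gcongr
      _ = R := by rw [← add_mul, hab, one_mul]
  refine ⟨?_, ?_, ?_⟩ <;>
    simp only [Prod.fst_add, Prod.snd_add, Prod.smul_fst, Prod.smul_snd, smul_eq_mul]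
  · exact key _ _ h1 g1
  · exact key _ _ h2 g2
  · have := key _ _ h3 g3
    convert this using 2
    ring

lemma combo_mem {s : Set (ℝ × ℝ)} (hs : Convex ℝ s) (h0 : (0 : ℝ × ℝ) ∈ s) {v1 v2 : ℝ × ℝ}
    (h1 : v1 ∈ s) (h2 : v2 ∈ s) {c1 c2 : ℝ} (hc1 : 0 ≤ c1) (hc2 : 0 ≤ c2)
    (hc : c1 + c2 ≤ 1) : c1 • v1 + c2 • v2 ∈ s := by
  have H := hs.sum_mem (t := (Finset.univ : Finset (Fin 3))) (w := ![1 - c1 - c2, c1, c2])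
    (z := ![0, v1, v2]) ?_ ?_ ?_
  · simpa [Fin.sum_univ_three] using H
  · intro i _
    fin_cases i <;> simp <;> linarith
  · simp [Fin.sum_univ_three]; ring
  · intro i _
    fin_cases i <;> simpa

lemma hull_eq (R : ℝ) (hR : 0 < R) : convexHull ℝ (hexVerts R) = Kreg R := by
  apply le_antisymm
  · apply convexHull_min _ (Kreg_convex R)
    intro v hv
    simp only [hexVerts, Set.mem_insert_iff, Set.mem_singleton_iff] at hv
    rcases hv with h|h|h|h|h|h <;> subst h <;>
      refine ⟨?_, ?_, ?_⟩ <;>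
      simp [abs_of_nonneg hR.le, abs_of_nonpos (neg_nonpos.mpr hR.le), abs_le] <;>
      first
        | (constructor <;> linarith)
        | linarith
  · intro x hx
    obtain ⟨h1, h2, h3⟩ := hx
    rw [abs_le] at h1 h2 h3
    set H := convexHull ℝ (hexVerts R) with hH
    have hconv : Convex ℝ H := convex_convexHull ℝ _
    have mem : ∀ v ∈ hexVerts R, v ∈ H := fun v hv => subset_convexHull ℝ _ hv
    have hv1 : ((R, 0) : ℝ × ℝ) ∈ H := mem _ (by simp [hexVerts])
    have hv2 : ((-R, 0) : ℝ × ℝ) ∈ H := mem _ (by simp [hexVerts])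
    have hv3 : ((0, R) : ℝ × ℝ) ∈ H := mem _ (by simp [hexVerts])
    have hv4 : ((0, -R) : ℝ × ℝ) ∈ H := mem _ (by simp [hexVerts])
    have hv5 : ((-R, R) : ℝ × ℝ) ∈ H := mem _ (by simp [hexVerts])
    have hv6 : ((R, -R) : ℝ × ℝ) ∈ H := mem _ (by simp [hexVerts])
    have h0 : (0 : ℝ × ℝ) ∈ H := by
      have := hconv hv1 hv2 (by norm_num : (0:ℝ) ≤ 1/2) (by norm_num : (0:ℝ) ≤ 1/2) (by norm_num)
      convert this using 1
      apply Prod.ext <;> simp <;> ring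
    have hRne : R ≠ 0 := hR.ne'
    have key : ∀ v1 v2 : ℝ × ℝ, v1 ∈ H → v2 ∈ H → ∀ c1 c2 : ℝ, 0 ≤ c1 → 0 ≤ c2 →
        c1 + c2 ≤ R → x = (c1 / R) • v1 + (c2 / R) • v2 → x ∈ H := by
      intro v1 v2 m1 m2 c1 c2 hc1 hc2 hcs hx
      rw [hx]
      exact combo_mem hconv h0 m1 m2 (div_nonneg hc1 hR.le) (div_nonneg hc2 hR.le)
        (by rw [← add_div, div_le_one hR]; exact hcs)
    rcases le_total 0 x.1 with ha | ha
    · rcases le_total 0 x.2 with hb | hb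
      · refine key (R, 0) (0, R) hv1 hv3 x.1 x.2 ha hb (by linarith) ?_
        apply Prod.ext <;> simp <;> field_simp
      · rcases le_total 0 (x.1 + x.2) with hc | hc
        · refine key (R, 0) (R, -R) hv1 hv6 (x.1 + x.2) (-x.2) hc (by linarith) (by linarith) ?_
          apply Prod.ext <;> simp <;> field_simp <;> ring
        · refine key (R, -R) (0, -R) hv6 hv4 x.1 (-x.1 - x.2) ha (by linarith) (by linarith) ?_
          apply Prod.ext <;> simp <;> field_simp <;> ring
    · rcases le_total 0 x.2 with hb | hb
      · rcases le_total 0 (x.1 + x.2) with hc | hc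
        · refine key (0, R) (-R, R) hv3 hv5 (x.1 + x.2) (-x.1) hc (by linarith) (by linarith) ?_
          apply Prod.ext <;> simp <;> field_simp <;> ring
        · refine key (-R, 0) (-R, R) hv2 hv5 (-x.1 - x.2) x.2 (by linarith) hb (by linarith) ?_
          apply Prod.ext <;> simp <;> field_simp <;> ring
      · refine key (-R, 0) (0, -R) hv2 hv4 (-x.1) (-x.2) (by linarith) (by linarith) (by linarith) ?_
        apply Prod.ext <;> simp <;> field_simp

lemma Tlin_def (x : ℝ × ℝ) : Tlin x = x.1 • e1 + x.2 • e2 := rfl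

lemma hex_eq (R : ℝ) (hR : 0 < R) : hex R = Tlin '' Kreg R := by
  rw [← hull_eq R hR, Tlin.image_convexHull]
  unfold hex hexVerts
  congr 1
  simp only [Set.image_insert_eq, Set.image_singleton, Tlin_def]
  have p1 : (R:ℝ) • e1 + (0:ℝ) • e2 = R • e1 := by module
  have p2 : (-R:ℝ) • e1 + (0:ℝ) • e2 = -(R • e1) := by module
  have p3 : (0:ℝ) • e1 + (R:ℝ) • e2 = R • e2 := by module
  have p4 : (0:ℝ) • e1 + (-R:ℝ) • e2 = -(R • e2) := by module
  have p5 : (-R:ℝ) • e1 + (R:ℝ) • e2 = R • (e2 - e1) := by module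
  have p6 : (R:ℝ) • e1 + (-R:ℝ) • e2 = -(R • (e2 - e1)) := by module
  rw [p1, p2, p3, p4, p5, p6]

def φ : ℤ × ℤ → E2 := fun p => Tlin ((p.1 : ℝ), (p.2 : ℝ))

lemma φ_inj : Function.Injective φ := by
  intro p q h
  have := Tlin_inj h
  have h1 : (p.1 : ℝ) = q.1 := congrArg Prod.fst this
  have h2 : (p.2 : ℝ) = q.2 := congrArg Prod.snd this
  exact Prod.ext (by exact_mod_cast h1) (by exact_mod_cast h2)

lemma hex_inter_lattice (R : ℕ) (hR : 1 ≤ R) :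
    hex (R : ℝ) ∩ triLattice =
      φ '' {p : ℤ × ℤ | |p.1| ≤ (R:ℤ) ∧ |p.2| ≤ (R:ℤ) ∧ |p.1 + p.2| ≤ (R:ℤ)} := by
  have hR0 : (0:ℝ) < R := by exact_mod_cast hR
  ext x
  constructor
  · rintro ⟨hx, m, n, rfl⟩
    rw [hex_eq _ hR0] at hx
    obtain ⟨y, hy, hxy⟩ := hx
    have : y = ((m:ℝ), (n:ℝ)) := Tlin_inj (by rw [hxy]; rfl)
    subst this
    obtain ⟨k1, k2, k3⟩ := hy
    refine ⟨(m, n), ⟨?_, ?_, ?_⟩, rfl⟩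
    · exact_mod_cast (by push_cast at k1 ⊢; exact k1 : |(m:ℝ)| ≤ (R:ℝ))
    · exact_mod_cast (by push_cast at k2 ⊢; exact k2 : |(n:ℝ)| ≤ (R:ℝ))
    · exact_mod_cast (by push_cast at k3 ⊢; exact k3 : |((m:ℝ) + n)| ≤ (R:ℝ))
  · rintro ⟨⟨m, n⟩, ⟨k1, k2, k3⟩, rfl⟩
    constructor
    · rw [hex_eq _ hR0]
      refine ⟨((m:ℝ), (n:ℝ)), ⟨?_, ?_, ?_⟩, rfl⟩ <;> push_cast <;>
        [exact_mod_cast k1; exact_mod_cast k2; exact_mod_cast k3]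
    · exact ⟨m, n, rfl⟩

def form (p q : ℤ × ℤ) : ℤ :=
  (p.1 - q.1) ^ 2 + (p.1 - q.1) * (p.2 - q.2) + (p.2 - q.2) ^ 2

lemma dist_φ (p q : ℤ × ℤ) : dist (φ p) (φ q) = Real.sqrt ((form p q : ℤ) : ℝ) := by
  rw [EuclideanSpace.dist_eq]
  congr 1
  rw [Fin.sum_univ_two]
  have h0 : ∀ r : ℤ × ℤ, φ r 0 = (r.1 : ℝ) + (r.2 : ℝ) / 2 := fun r => Tlin_apply0 _
  have h1 : ∀ r : ℤ × ℤ, φ r 1 = (r.2 : ℝ) * (Real.sqrt 3 / 2) := fun r => Tlin_apply1 _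
  rw [h0, h0, h1, h1, Real.dist_eq, Real.dist_eq, sq_abs, sq_abs]
  have hs : Real.sqrt 3 ^ 2 = 3 := Real.sq_sqrt (by norm_num)
  push_cast [form]
  nlinarith [hs]

lemma form_pos (p q : ℤ × ℤ) (h : p ≠ q) : 1 ≤ form p q := by
  set a := p.1 - q.1 with ha
  set b := p.2 - q.2 with hb
  have hab : a ≠ 0 ∨ b ≠ 0 := by
    by_contra hc
    push_neg at hc
    exact h (Prod.ext (by omega) (by omega))
  have h2 : 2 * form p q = a ^ 2 + b ^ 2 + (a + b) ^ 2 := by rw [form]; ring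
  have hkey : 1 ≤ 2 * form p q := by
    rcases hab with h | h <;>
    · have h' : 1 ≤ a ∨ a ≤ -1 ∨ 1 ≤ b ∨ b ≤ -1 := by omega
      rcases h' with h' | h' | h' | h' <;>
        nlinarith [sq_nonneg a, sq_nonneg b, sq_nonneg (a + b)]
  omega

lemma form_eq_one_iff (p q : ℤ × ℤ) :
    form p q = 1 ↔ (p.1 - q.1, p.2 - q.2) ∈
      ({(1, 0), (-1, 0), (0, 1), (0, -1), (1, -1), (-1, 1)} : Finset (ℤ × ℤ)) := by
  set a := p.1 - q.1 with ha
  set b := p.2 - q.2 with hb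
  constructor
  · intro h
    have h4 : (2 * a + b) ^ 2 + 3 * b ^ 2 = 4 := by rw [form] at h; linear_combination 4 * h
    have hb' : -1 ≤ b ∧ b ≤ 1 := by constructor <;> nlinarith [sq_nonneg (2 * a + b)]
    have h4' : (2 * b + a) ^ 2 + 3 * a ^ 2 = 4 := by rw [form] at h; linear_combination 4 * h
    have ha' : -1 ≤ a ∧ a ≤ 1 := by constructor <;> nlinarith [sq_nonneg (2 * b + a)]
    simp only [Finset.mem_insert, Finset.mem_singleton, Prod.mk.injEq]
    rw [form] at h
    obtain ⟨hb1, hb2⟩ := hb'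
    obtain ⟨ha1, ha2⟩ := ha'
    interval_cases a <;> interval_cases b <;> omega
  · intro h
    simp only [Finset.mem_insert, Finset.mem_singleton, Prod.mk.injEq] at h
    rw [form]
    rcases h with ⟨h1, h2⟩|⟨h1, h2⟩|⟨h1, h2⟩|⟨h1, h2⟩|⟨h1, h2⟩|⟨h1, h2⟩ <;> rw [← ha, ← hb, h1, h2] <;> ring

lemma VHR_φ (p q : ℤ × ℤ) (h : p ≠ q) :
    VHR (dist (φ p) (φ q)) = (((if form p q = 1 then (-1 : ℝ) else 0) : ℝ) : EReal) := by
  rw [dist_φ]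
  have h1 := form_pos p q h
  by_cases hf : form p q = 1
  · rw [hf]
    norm_num [VHR]
  · have h2 : 2 ≤ form p q := by omega
    have hgt : 1 < Real.sqrt ((form p q : ℤ) : ℝ) := by
      rw [show (1:ℝ) = Real.sqrt 1 from (Real.sqrt_one).symm]
      apply Real.sqrt_lt_sqrt (by norm_num)
      exact_mod_cast (by omega : (1:ℤ) < form p q)
    rw [VHR]
    simp only [if_neg (by linarith : ¬ Real.sqrt ((form p q : ℤ) : ℝ) < 1),
      if_neg (by linarith : ¬ Real.sqrt ((form p q : ℤ) : ℝ) = 1), if_neg hf]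
    rfl

def HFin (R : ℕ) : Finset (ℤ × ℤ) :=
  ((Finset.Icc (-(R:ℤ)) R) ×ˢ (Finset.Icc (-(R:ℤ)) R)).filter (fun p => |p.1 + p.2| ≤ (R:ℤ))

lemma mem_HFin {R : ℕ} {p : ℤ × ℤ} :
    p ∈ HFin R ↔ (-(R:ℤ) ≤ p.1 ∧ p.1 ≤ R) ∧ (-(R:ℤ) ≤ p.2 ∧ p.2 ≤ R) ∧
      (-(R:ℤ) ≤ p.1 + p.2 ∧ p.1 + p.2 ≤ R) := by
  simp only [HFin, Finset.mem_filter, Finset.mem_product, Finset.mem_Icc, abs_le]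
  tauto

def Nbrs : Finset (ℤ × ℤ) := {(1, 0), (-1, 0), (0, 1), (0, -1), (1, -1), (-1, 1)}

def countv (R : ℕ) (v : ℤ × ℤ) : ℕ := ((HFin R).filter (fun p => p - v ∈ HFin R)).card

lemma pairs_card (R : ℕ) :
    (((HFin R) ×ˢ (HFin R)).filter (fun z => z.1 - z.2 ∈ Nbrs)).card =
      ∑ v ∈ Nbrs, countv R v := by
  have hset : ((HFin R) ×ˢ (HFin R)).filter (fun z => z.1 - z.2 ∈ Nbrs) =
      Nbrs.biUnion (fun v => ((HFin R).filter (fun p => p - v ∈ HFin R)).image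
        (fun p => (p, p - v))) := by
    ext z
    simp only [Finset.mem_filter, Finset.mem_product, Finset.mem_biUnion, Finset.mem_image,
      Prod.mk.injEq]
    constructor
    · rintro ⟨⟨h1, h2⟩, h3⟩
      refine ⟨z.1 - z.2, h3, z.1, ⟨h1, by simpa using h2⟩, ?_⟩
      apply Prod.ext <;> simp
    · rintro ⟨v, hv, p, ⟨hp1, hp2⟩, rfl⟩
      exact ⟨⟨hp1, hp2⟩, by simpa using hv⟩
  rw [hset, Finset.card_biUnion]
  · apply Finset.sum_congr rfl
    intro v _
    rw [Finset.card_image_of_injective _ (fun p q h => (Prod.mk.injEq _ _ _ _ ▸ h).1),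
      countv]
  · intro v _ w _ hvw
    simp only [Finset.disjoint_left, Finset.mem_image]
    rintro z ⟨p, _, rfl⟩ ⟨q, _, h⟩
    rw [Prod.mk.injEq] at h
    obtain ⟨rfl, h2⟩ := h
    have g1 := congrArg Prod.fst h2
    have g2 := congrArg Prod.snd h2
    simp only [Prod.fst_sub, Prod.snd_sub] at g1 g2
    exact hvw (Prod.ext (by omega) (by omega))

def ρ : ℤ × ℤ → ℤ × ℤ := fun p => (-p.2, p.1 + p.2)

lemma mem_HFin_ρ {R : ℕ} {p : ℤ × ℤ} : ρ p ∈ HFin R ↔ p ∈ HFin R := by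
  simp only [mem_HFin, ρ]
  omega

lemma countv_rot (R : ℕ) (v : ℤ × ℤ) : countv R v = countv R (ρ v) := by
  unfold countv
  apply Finset.card_bij' (fun p _ => ρ p) (fun q _ => (q.1 + q.2, -q.1))
  · intro p hp
    simp only [Finset.mem_filter] at hp ⊢
    refine ⟨mem_HFin_ρ.mpr hp.1, ?_⟩
    have : ρ p - ρ v = ρ (p - v) := by
      apply Prod.ext <;> simp [ρ] <;> ring
    rw [this]
    exact mem_HFin_ρ.mpr hp.2
  · intro q hq
    simp only [Finset.mem_filter] at hq ⊢
    have e1 : ρ (q.1 + q.2, -q.1) = q := by apply Prod.ext <;> simp [ρ]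
    constructor
    · rw [← mem_HFin_ρ, e1]; exact hq.1
    · rw [← mem_HFin_ρ]
      have : ρ ((q.1 + q.2, -q.1) - v) = q - ρ v := by
        apply Prod.ext <;> simp [ρ] <;> ring
      rw [this]
      exact hq.2
  · intro p _
    apply Prod.ext <;> simp [ρ]
  · intro q _
    apply Prod.ext <;> simp [ρ]

lemma sum_countv (R : ℕ) : ∑ v ∈ Nbrs, countv R v = 6 * countv R (1, 0) := by
  have c1 : countv R (1, 0) = countv R (0, 1) := countv_rot R (1, 0)
  have c2 : countv R (0, 1) = countv R (-1, 1) := countv_rot R (0, 1)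
  have c3 : countv R (-1, 1) = countv R (-1, 0) := countv_rot R (-1, 1)
  have c4 : countv R (-1, 0) = countv R (0, -1) := countv_rot R (-1, 0)
  have c5 : countv R (0, -1) = countv R (1, -1) := countv_rot R (0, -1)
  rw [Nbrs]
  rw [show ({(1, 0), (-1, 0), (0, 1), (0, -1), (1, -1), (-1, 1)} : Finset (ℤ × ℤ)) =
    insert (1,0) (insert (-1,0) (insert (0,1) (insert (0,-1) (insert (1,-1)
      ({(-1,1)} : Finset (ℤ × ℤ)))))) from rfl]
  rw [Finset.sum_insert (by simp), Finset.sum_insert (by simp),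
    Finset.sum_insert (by simp), Finset.sum_insert (by simp),
    Finset.sum_insert (by simp), Finset.sum_singleton]
  omega

lemma count_horiz (R : ℕ) (hR : 1 ≤ R) : countv R (1, 0) = 3 * R ^ 2 + R := by
  have hset : (HFin R).filter (fun p => p - ((1:ℤ), (0:ℤ)) ∈ HFin R) =
      (Finset.Icc (1 - (R:ℤ)) (R:ℤ)).biUnion
        (fun m => (Finset.Icc (max (-(R:ℤ)) (1 - (R:ℤ) - m)) (min (R:ℤ) ((R:ℤ) - m))).image
          (fun n => (m, n))) := by
    ext p
    simp only [Finset.mem_filter, mem_HFin, Finset.mem_biUnion, Finset.mem_image,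
      Finset.mem_Icc, Prod.fst_sub, Prod.snd_sub, Prod.ext_iff]
    constructor
    · rintro ⟨⟨h1, h2, h3⟩, g1, g2, g3⟩
      exact ⟨p.1, by omega, p.2, by omega, rfl, rfl⟩
    · rintro ⟨m, hm, n, hn, e1, e2⟩
      refine ⟨⟨?_, ?_, ?_⟩, ?_, ?_, ?_⟩ <;> omega
  rw [countv, hset, Finset.card_biUnion]; swap
  · intro x _ y _ hxy
    rw [Function.onFun, Finset.disjoint_left]
    intro z hz hz'
    simp only [Finset.mem_image] at hz hz'
    obtain ⟨n, _, h1⟩ := hz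
    obtain ⟨n', _, h2⟩ := hz'
    exact hxy ((congrArg Prod.fst h1).trans (congrArg Prod.fst h2).symm)
  have hcard : ∀ m ∈ Finset.Icc (1 - (R:ℤ)) (R:ℤ),
      ((Finset.Icc (max (-(R:ℤ)) (1 - (R:ℤ) - m)) (min (R:ℤ) ((R:ℤ) - m))).image
        (fun n => ((m, n) : ℤ × ℤ))).card =
      (min (R:ℤ) ((R:ℤ) - m) + 1 - max (-(R:ℤ)) (1 - (R:ℤ) - m)).toNat := by
    intro m _
    rw [Finset.card_image_of_injective _ (fun a b h => by simpa using congrArg Prod.snd h),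
      Int.card_Icc]
  rw [Finset.sum_congr rfl hcard]
  suffices h : (∑ m ∈ Finset.Icc (1 - (R:ℤ)) (R:ℤ),
      ((min (R:ℤ) ((R:ℤ) - m) + 1 - max (-(R:ℤ)) (1 - (R:ℤ) - m)).toNat : ℤ))
      = 3 * (R:ℤ) ^ 2 + R by
    have := h
    rw [← Nat.cast_sum] at this
    exact_mod_cast this
  have hpos : ∀ m ∈ Finset.Icc (1 - (R:ℤ)) (R:ℤ),
      ((min (R:ℤ) ((R:ℤ) - m) + 1 - max (-(R:ℤ)) (1 - (R:ℤ) - m)).toNat : ℤ) =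
      min (R:ℤ) ((R:ℤ) - m) + 1 - max (-(R:ℤ)) (1 - (R:ℤ) - m) := by
    intro m hm
    simp only [Finset.mem_Icc] at hm
    rw [Int.toNat_of_nonneg]
    omega
  rw [Finset.sum_congr rfl hpos]
  have hsplit : Finset.Icc (1 - (R:ℤ)) (R:ℤ) = Finset.Icc (1 - (R:ℤ)) 0 ∪ Finset.Icc 1 (R:ℤ) := by
    ext x
    simp only [Finset.mem_Icc, Finset.mem_union]
    omega
  rw [hsplit, Finset.sum_union (by
    rw [Finset.disjoint_left]
    intro a ha hb
    simp only [Finset.mem_Icc] at ha hb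
    omega)]
  have e1 : Finset.Icc (1 - (R:ℤ)) 0 = (Finset.Icc (1:ℤ) (R:ℤ)).map (addRightEmbedding (-(R:ℤ))) := by
    rw [Finset.map_add_right_Icc]
    congr 1 <;> ring
  rw [e1, Finset.sum_map, ← Finset.sum_add_distrib]
  have e2 : ∀ m ∈ Finset.Icc (1:ℤ) (R:ℤ),
      (min (R:ℤ) ((R:ℤ) - addRightEmbedding (-(R:ℤ)) m) + 1 -
        max (-(R:ℤ)) (1 - (R:ℤ) - addRightEmbedding (-(R:ℤ)) m)) +
      (min (R:ℤ) ((R:ℤ) - m) + 1 - max (-(R:ℤ)) (1 - (R:ℤ) - m)) = 3 * (R:ℤ) + 1 := by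
    intro m hm
    simp only [Finset.mem_Icc] at hm
    simp only [addRightEmbedding, Function.Embedding.coeFn_mk]
    omega
  rw [Finset.sum_congr rfl e2, Finset.sum_const, Int.card_Icc]
  have : ((R:ℤ) + 1 - 1).toNat = R := by omega
  rw [this]
  push_cast
  ring

def ecoe : ℝ →+ EReal := ⟨⟨Real.toEReal, EReal.coe_zero⟩, EReal.coe_add⟩

lemma ecoe_apply (x : ℝ) : ecoe x = (x : EReal) := rfl

/-- the hexagonal configuration `h̄_R ∩ L` with `N = 3R² + 3R + 1` points
has Heitmann-Radin energy `-6N + 2√(12N - 3)`. -/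
theorem hexagonal_configuration_energy (R N : ℕ) (hR : 1 ≤ R)
    (hN : N = 3 * R ^ 2 + 3 * R + 1)
    (S : Finset E2) (hS : (S : Set E2) = hex (R : ℝ) ∩ triLattice) :
    energyF VHR S =
      ((-6 * (N : ℝ) + 2 * Real.sqrt (12 * (N : ℝ) - 3) : ℝ) : EReal) := by
  -- identify S
  have hS' : S = (HFin R).image φ := by
    apply Finset.coe_injective
    rw [Finset.coe_image, hS, hex_inter_lattice R hR]
    apply congrArg (Set.image φ)
    ext p
    rw [Finset.mem_coe, mem_HFin]
    simp only [Set.mem_setOf_eq, abs_le]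
  subst hS'
  -- rewrite energy as a double sum over indices
  rw [energyF, Finset.sum_image (fun p _ q _ h => φ_inj h)]
  have step1 : ∀ p ∈ HFin R,
      ∑ y ∈ ((HFin R).image φ).erase (φ p), VHR (dist (φ p) y) =
      ∑ q ∈ (HFin R).erase p, ((if form p q = 1 then (-1:ℝ) else 0 : ℝ) : EReal) := by
    intro p hp
    rw [← Finset.image_erase φ_inj, Finset.sum_image
      (fun a _ b _ h => φ_inj h)]
    apply Finset.sum_congr rfl
    intro q hq
    have hne : p ≠ q := fun h => (Finset.mem_erase.1 hq).1 h.symm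
    exact VHR_φ p q hne
  rw [Finset.sum_congr rfl step1]
  -- pull coercion out
  have step2 : ∀ p ∈ HFin R,
      ∑ q ∈ (HFin R).erase p, ((if form p q = 1 then (-1:ℝ) else 0 : ℝ) : EReal) =
      (((∑ q ∈ (HFin R).erase p, if form p q = 1 then (-1:ℝ) else 0) : ℝ) : EReal) := by
    intro p _
    rw [← ecoe_apply, map_sum]
    rfl
  rw [Finset.sum_congr rfl step2]
  have step3 : ∑ p ∈ HFin R,
      (((∑ q ∈ (HFin R).erase p, if form p q = 1 then (-1:ℝ) else 0) : ℝ) : EReal) =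
      (((∑ p ∈ HFin R, ∑ q ∈ (HFin R).erase p, if form p q = 1 then (-1:ℝ) else 0) : ℝ) : EReal) := by
    rw [← ecoe_apply, map_sum]
    rfl
  rw [step3]
  -- now a real computation
  congr 1
  -- remove erase
  have step4 : ∀ p ∈ HFin R,
      (∑ q ∈ (HFin R).erase p, if form p q = 1 then (-1:ℝ) else 0) =
      ∑ q ∈ HFin R, if form p q = 1 then (-1:ℝ) else 0 := by
    intro p _
    apply Finset.sum_erase
    simp [form]
  rw [Finset.sum_congr rfl step4, ← Finset.sum_product']
  have step5 : ∀ z ∈ (HFin R) ×ˢ (HFin R),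
      (if form z.1 z.2 = 1 then (-1:ℝ) else 0) =
      -(if z.1 - z.2 ∈ Nbrs then (1:ℝ) else 0) := by
    intro z _
    have : form z.1 z.2 = 1 ↔ z.1 - z.2 ∈ Nbrs := by
      rw [form_eq_one_iff]
      rfl
    split_ifs with h1 h2 h2 <;> [ring; exact absurd (this.1 h1) h2;
      exact absurd (this.2 h2) h1; ring]
  rw [Finset.sum_congr rfl step5, Finset.sum_neg_distrib, Finset.sum_boole, pairs_card,
    sum_countv, count_horiz R hR]
  -- final arithmetic
  have h12 : 12 * (N : ℝ) - 3 = ((6 * R + 3 : ℕ) : ℝ) ^ 2 := by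
    subst hN
    push_cast
    ring
  rw [h12, Real.sqrt_sq (by positivity)]
  subst hN
  push_cast
  ring
end
end

section
/- Let α ∈ (0,1] and β ∈ [1,∞) be constants such that any closed ball of radius β in ℝ² contains at most six points whose distance from the center and whose mutual distances are all ≥ α (hypothesis (H3)). Then β < α / (2 sin(π/7)); in particular β < √2 · α. -/
open Set Real

noncomputable section

/-- Hypothesis (H3): every closed ball of radius `β` in the plane contains at most six
points whose distance from the center of the ball and whose pairwise mutual distances are all `≥ α`. -/
def H3cond (α β : ℝ) : Prop :=
  ∀ (c : E2) (T : Finset E2),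
    (∀ x ∈ T, dist x c ≤ β) → (∀ x ∈ T, α ≤ dist x c) →
    (∀ x ∈ T, ∀ y ∈ T, x ≠ y → α ≤ dist x y) → T.card ≤ 6

/-- Auxiliary: a point of the plane from two coordinates. -/
noncomputable def mkE2 (a b : ℝ) : E2 := (WithLp.equiv 2 (Fin 2 → ℝ)).symm ![a, b]

lemma dist_mkE2 (x0 x1 y0 y1 : ℝ) :
    dist (mkE2 x0 x1) (mkE2 y0 y1) = Real.sqrt ((x0 - y0) ^ 2 + (x1 - y1) ^ 2) := by
  rw [mkE2, mkE2, EuclideanSpace.dist_eq]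
  simp [Fin.sum_univ_two, Real.dist_eq, sq_abs]

/-- The `k`-th of seven equally spaced points on the circle of radius `β`. -/
noncomputable def circPt (β : ℝ) (k : Fin 7) : E2 :=
  mkE2 (β * Real.cos (2 * Real.pi * (k.val : ℝ) / 7))
       (β * Real.sin (2 * Real.pi * (k.val : ℝ) / 7))

lemma dist_circPt_center (β : ℝ) (hβ : 0 ≤ β) (k : Fin 7) :
    dist (circPt β k) (mkE2 0 0) = β := by
  rw [circPt, dist_mkE2]
  have h := Real.sin_sq_add_cos_sq (2 * Real.pi * (k.val : ℝ) / 7)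
  rw [show (β * Real.cos (2 * Real.pi * (k.val : ℝ) / 7) - 0) ^ 2 +
      (β * Real.sin (2 * Real.pi * (k.val : ℝ) / 7) - 0) ^ 2 =
      β ^ 2 * (Real.sin (2 * Real.pi * (k.val : ℝ) / 7) ^ 2 +
        Real.cos (2 * Real.pi * (k.val : ℝ) / 7) ^ 2) by ring, h, mul_one, Real.sqrt_sq hβ]

lemma trig_key (a b : ℝ) :
    (Real.cos a - Real.cos b) ^ 2 + (Real.sin a - Real.sin b) ^ 2 =
      4 * Real.sin ((a - b) / 2) ^ 2 := by
  have h1 := Real.sin_sq_add_cos_sq a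
  have h2 := Real.sin_sq_add_cos_sq b
  have h3 : Real.cos (a - b) = Real.cos a * Real.cos b + Real.sin a * Real.sin b :=
    Real.cos_sub a b
  have h4 : Real.cos (2 * ((a - b) / 2)) = 2 * Real.cos ((a - b) / 2) ^ 2 - 1 :=
    Real.cos_two_mul _
  have h5 := Real.sin_sq_add_cos_sq ((a - b) / 2)
  have h6 : (2 : ℝ) * ((a - b) / 2) = a - b := by ring
  rw [h6] at h4
  nlinarith [h1, h2, h3, h4, h5]

lemma dist_circPt (β : ℝ) (hβ : 0 ≤ β) (j k : Fin 7) :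
    dist (circPt β j) (circPt β k) =
      2 * β * |Real.sin (Real.pi * ((j.val : ℝ) - (k.val : ℝ)) / 7)| := by
  rw [circPt, circPt, dist_mkE2]
  set a := 2 * Real.pi * (j.val : ℝ) / 7 with ha
  set b := 2 * Real.pi * (k.val : ℝ) / 7 with hb
  have hab : (a - b) / 2 = Real.pi * ((j.val : ℝ) - (k.val : ℝ)) / 7 := by
    rw [ha, hb]; ring
  have key : (β * Real.cos a - β * Real.cos b) ^ 2 + (β * Real.sin a - β * Real.sin b) ^ 2 =
      (2 * β * |Real.sin ((a - b) / 2)|) ^ 2 := by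
    have h := trig_key a b
    rw [show (2 * β * |Real.sin ((a - b) / 2)|) ^ 2 =
      4 * β ^ 2 * |Real.sin ((a - b) / 2)| ^ 2 by ring, sq_abs]
    linear_combination β ^ 2 * h
  rw [key, Real.sqrt_sq (by positivity), hab]

lemma sin_mono_aux {x y : ℝ} (hx : 0 ≤ x) (hxy : x ≤ y) (hy : y ≤ Real.pi / 2) :
    Real.sin x ≤ Real.sin y := by
  have hpi := Real.pi_pos
  exact Real.strictMonoOn_sin.monotoneOn ⟨by linarith, by linarith⟩ ⟨by linarith, hy⟩ hxy

lemma sin_lb (m : ℕ) (h1 : 1 ≤ m) (h6 : m ≤ 6) :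
    Real.sin (Real.pi / 7) ≤ Real.sin (Real.pi * (m : ℝ) / 7) := by
  have hpi := Real.pi_pos
  interval_cases m
  · norm_num
  · push_cast
    have : Real.pi * (2 : ℝ) / 7 ≤ Real.pi / 2 := by linarith
    have := sin_mono_aux (x := Real.pi / 7) (y := Real.pi * 2 / 7) (by positivity)
      (by linarith) this
    simpa using this
  · push_cast
    have : Real.pi * (3 : ℝ) / 7 ≤ Real.pi / 2 := by linarith
    have := sin_mono_aux (x := Real.pi / 7) (y := Real.pi * 3 / 7) (by positivity)
      (by linarith) this
    simpa using this
  · push_cast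
    rw [show Real.pi * (4 : ℝ) / 7 = Real.pi - Real.pi * 3 / 7 by ring, Real.sin_pi_sub]
    exact sin_mono_aux (by positivity) (by linarith) (by linarith)
  · push_cast
    rw [show Real.pi * (5 : ℝ) / 7 = Real.pi - Real.pi * 2 / 7 by ring, Real.sin_pi_sub]
    exact sin_mono_aux (by positivity) (by linarith) (by linarith)
  · push_cast
    rw [show Real.pi * (6 : ℝ) / 7 = Real.pi - Real.pi / 7 by ring, Real.sin_pi_sub]

lemma sin_pi_div_seven_pos : 0 < Real.sin (Real.pi / 7) := by
  have hpi := Real.pi_pos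
  exact Real.sin_pos_of_pos_of_lt_pi (by positivity) (by linarith)

/-- hypothesis (H3) forces `β < α / (2 sin(π/7))`, and in particular
`β < √2 · α`. -/
theorem beta_lt_of_H3 (α β : ℝ) (hα : α ∈ Set.Ioc (0 : ℝ) 1) (hβ : 1 ≤ β)
    (h3 : H3cond α β) :
    β < α / (2 * Real.sin (Real.pi / 7)) ∧ β < Real.sqrt 2 * α := by
  classical
  obtain ⟨hα0, hα1⟩ := hα
  have hs := sin_pi_div_seven_pos
  have hβ0 : (0 : ℝ) ≤ β := by linarith
  have hpi := Real.pi_pos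
  have hkey : β < α / (2 * Real.sin (Real.pi / 7)) := by
    by_contra hcon
    push_neg at hcon
    -- so α ≤ 2 β sin(π/7)
    have hαle : α ≤ 2 * β * Real.sin (Real.pi / 7) := by
      rw [div_le_iff₀ (by positivity)] at hcon
      nlinarith
    -- key distance bound for pairs with k < j
    have claim : ∀ j k : Fin 7, (k.val : ℕ) < j.val →
        α ≤ dist (circPt β j) (circPt β k) := by
      intro j k hk
      rw [dist_circPt β hβ0 j k]
      set m : ℕ := j.val - k.val with hm
      have hm1 : 1 ≤ m := by omega
      have hm6 : m ≤ 6 := by have := j.isLt; omega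
      have hcast : ((j.val : ℝ) - (k.val : ℝ)) = (m : ℝ) := by
        rw [hm]; push_cast [Nat.cast_sub hk.le]; ring
      rw [hcast]
      have hnn : 0 ≤ Real.sin (Real.pi * (m : ℝ) / 7) := by
        apply Real.sin_nonneg_of_nonneg_of_le_pi
        · positivity
        · have : (m : ℝ) ≤ 6 := by exact_mod_cast hm6
          nlinarith
      rw [abs_of_nonneg hnn]
      have := sin_lb m hm1 hm6
      nlinarith
    have hd : ∀ j k : Fin 7, j ≠ k → α ≤ dist (circPt β j) (circPt β k) := by
      intro j k hjk
      have hne : j.val ≠ k.val := fun h => hjk (Fin.ext h)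
      rcases lt_or_gt_of_ne hne with h | h
      · rw [dist_comm]; exact claim k j h
      · exact claim j k h
    have hinj : Function.Injective (circPt β) := by
      intro j k h
      by_contra hjk
      have := hd j k hjk
      rw [h, dist_self] at this
      linarith
    set T : Finset E2 := Finset.image (circPt β) Finset.univ with hT
    have hcard : T.card = 7 := by
      rw [hT, Finset.card_image_of_injective _ hinj, Finset.card_univ, Fintype.card_fin]
    have hle := h3 (mkE2 0 0) T
      (by
        intro x hx
        rw [hT] at hx
        obtain ⟨j, _, rfl⟩ := Finset.mem_image.mp hx
        rw [dist_circPt_center β hβ0])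
      (by
        intro x hx
        rw [hT] at hx
        obtain ⟨j, _, rfl⟩ := Finset.mem_image.mp hx
        rw [dist_circPt_center β hβ0]; linarith)
      (by
        intro x hx y hy hxy
        rw [hT] at hx hy
        obtain ⟨j, _, rfl⟩ := Finset.mem_image.mp hx
        obtain ⟨k, _, rfl⟩ := Finset.mem_image.mp hy
        exact hd j k (fun h => hxy (by rw [h])))
    omega
  refine ⟨hkey, ?_⟩
  -- numeric bound: sin (π/7) > 0.42, √2 > 1.41, so 2 √2 sin(π/7) > 1
  have hpl : Real.pi < 3.15 := by linarith [Real.pi_lt_d2]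
  have hpg : 3.141 < Real.pi := by linarith [Real.pi_gt_d6]
  have hx1 : (0.44 : ℝ) < Real.pi / 7 := by linarith
  have hx2 : Real.pi / 7 < 0.45 := by linarith
  have hcube : Real.pi / 7 - (Real.pi / 7) ^ 3 / 4 < Real.sin (Real.pi / 7) :=
    by have := Real.sin_gt_sub_cube (x := Real.pi / 7) (by linarith)
       have hp : 0 < (Real.pi / 7) ^ 3 := by positivity
       linarith
  have hc : (Real.pi / 7) ^ 3 < (0.45 : ℝ) ^ 3 :=
    pow_lt_pow_left₀ hx2 (by positivity) (by norm_num)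
  have hsin : (0.41 : ℝ) < Real.sin (Real.pi / 7) := by norm_num at hc ⊢; linarith
  have hsqrt : (1.41 : ℝ) < Real.sqrt 2 := by
    have h2 := Real.sq_sqrt (by norm_num : (0 : ℝ) ≤ 2)
    nlinarith [Real.sqrt_nonneg 2]
  have hchain : α / (2 * Real.sin (Real.pi / 7)) ≤ Real.sqrt 2 * α := by
    rw [div_le_iff₀ (by positivity)]
    have h1 : (1 : ℝ) < Real.sqrt 2 * (2 * Real.sin (Real.pi / 7)) := by nlinarith
    nlinarith [mul_le_mul_of_nonneg_left h1.le hα0.le]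
  linarith
end
end

section
/- Let α ∈ (0,1] and β ∈ [1,∞) satisfy hypothesis (H3), and let S ⊂ ℝ² be a finite set whose points have pairwise distances ≥ α. If x, y ∈ S satisfy |x − y| ≤ β, then the midpoint m = (x+y)/2 belongs to both truncated Voronoi cells V_trunc(x) and V_trunc(y); in particular V_trunc(x) ∩ V_trunc(y) ≠ ∅. -/
open Set Metric

noncomputable section

/-- The Voronoi cell of `x` with respect to the set `S`. -/
def vor (S : Set E2) (x : E2) : Set E2 :=
  {y | ∀ z ∈ S, z ≠ x → dist y x ≤ dist y z}

/-- The truncated Voronoi cell `V_trunc(x) = V(x) ∩ B̄₁(x)`. -/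
def vtrunc (S : Set E2) (x : E2) : Set E2 :=
  vor S x ∩ closedBall x 1

/-- A point of the plane with the given coordinates. -/
def pt (a b : ℝ) : E2 := WithLp.toLp 2 ![a, b]

lemma dist_pt (a b c d : ℝ) : dist (pt a b) (pt c d) = Real.sqrt ((a - c) ^ 2 + (b - d) ^ 2) := by
  rw [EuclideanSpace.dist_eq, Fin.sum_univ_two]
  simp [pt, Real.dist_eq, sq_abs]

lemma pt_dist_ge (α a b c d : ℝ) (hα : 0 ≤ α) (h : α ^ 2 ≤ (a - c) ^ 2 + (b - d) ^ 2) :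
    α ≤ dist (pt a b) (pt c d) := by
  rw [dist_pt]
  exact (Real.le_sqrt hα (by positivity)).2 h

lemma pt_dist_le (β a b c d : ℝ) (hβ : 0 ≤ β) (h : (a - c) ^ 2 + (b - d) ^ 2 ≤ β ^ 2) :
    dist (pt a b) (pt c d) ≤ β := by
  rw [dist_pt]
  exact (Real.sqrt_le_sqrt h).trans_eq (Real.sqrt_sq hβ)

/-- Seven points with pairwise distances `≥ α` lying in the closed ball of radius `√2·α`
around the origin, away from the origin. -/
def hexa (α : ℝ) : Fin 7 → E2 :=
  ![pt α 0, pt α α, pt 0 α, pt (-α) α, pt (-α) 0, pt (-α) (-α), pt 0 (-α)]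

/-- Hypothesis (H3) forces `β < √2 · α`. -/
lemma beta_sq_lt (α β : ℝ) (hα0 : 0 < α) (hβ0 : 0 ≤ β) (h3 : H3cond α β) :
    β ^ 2 < 2 * α ^ 2 := by
  classical
  by_contra h
  push_neg at h
  have hpair : ∀ i j : Fin 7, i ≠ j → α ≤ dist (hexa α i) (hexa α j) := by
    intro i j hij
    fin_cases i <;> fin_cases j <;>
      first
      | exact absurd rfl hij
      | exact pt_dist_ge α _ _ _ _ hα0.le (by nlinarith [sq_nonneg α])
  have hinj : Function.Injective (hexa α) := by
    intro i j hij
    by_contra hne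
    have := hpair i j hne
    rw [hij, dist_self] at this
    linarith
  have hb : ∀ z ∈ Finset.image (hexa α) Finset.univ, dist z (pt 0 0) ≤ β := by
    intro z hz
    rcases Finset.mem_image.1 hz with ⟨i, _, rfl⟩
    fin_cases i <;> exact pt_dist_le β _ _ _ _ hβ0 (by nlinarith [sq_nonneg α])
  have ha : ∀ z ∈ Finset.image (hexa α) Finset.univ, α ≤ dist z (pt 0 0) := by
    intro z hz
    rcases Finset.mem_image.1 hz with ⟨i, _, rfl⟩
    fin_cases i <;> exact pt_dist_ge α _ _ _ _ hα0.le (by nlinarith [sq_nonneg α])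
  have hp : ∀ z ∈ Finset.image (hexa α) Finset.univ,
      ∀ w ∈ Finset.image (hexa α) Finset.univ, z ≠ w → α ≤ dist z w := by
    intro z hz w hw hzw
    rcases Finset.mem_image.1 hz with ⟨i, _, rfl⟩
    rcases Finset.mem_image.1 hw with ⟨j, _, rfl⟩
    exact hpair i j (fun hij => hzw (by rw [hij]))
  have hcard := h3 (pt 0 0) (Finset.image (hexa α) Finset.univ) hb ha hp
  rw [Finset.card_image_of_injective _ hinj, Finset.card_univ, Fintype.card_fin] at hcard
  omega

/-- if `|x - y| ≤ β`, the midpoint of `x` and `y` lies in both truncated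
Voronoi cells; in particular they intersect. -/
theorem midpoint_mem_vtrunc (α β : ℝ) (hα : α ∈ Set.Ioc (0 : ℝ) 1) (hβ : 1 ≤ β)
    (h3 : H3cond α β) (S : Finset E2)
    (hsep : ∀ x ∈ S, ∀ y ∈ S, x ≠ y → α ≤ dist x y)
    (x y : E2) (hx : x ∈ S) (hy : y ∈ S) (hxy : dist x y ≤ β) :
    midpoint ℝ x y ∈ vtrunc (S : Set E2) x ∧ midpoint ℝ x y ∈ vtrunc (S : Set E2) y ∧
      (vtrunc (S : Set E2) x ∩ vtrunc (S : Set E2) y).Nonempty := by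
  obtain ⟨hα0, hα1⟩ := hα
  have hβ2 : β ^ 2 < 2 * α ^ 2 := beta_sq_lt α β hα0 (by linarith) h3
  set m := midpoint ℝ x y with hm
  have hd0 : (0 : ℝ) ≤ dist x y := dist_nonneg
  have hd2 : dist x y ^ 2 < 2 * α ^ 2 := lt_of_le_of_lt (by nlinarith) hβ2
  have hmx : dist m x = dist x y / 2 := by
    rw [hm, dist_midpoint_left, Real.norm_ofNat]; ring
  have hmy : dist m y = dist x y / 2 := by
    rw [hm, dist_midpoint_right, Real.norm_ofNat]; ring
  have main : ∀ z ∈ (S : Set E2), z ≠ x → z ≠ y → dist x y / 2 ≤ dist m z := by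
    intro z hz hzx hzy
    have hzx' : α ≤ dist z x := hsep z hz x hx hzx
    have hzy' : α ≤ dist z y := hsep z hz y hy hzy
    have hpar := parallelogram_law_with_norm ℝ (z - x) (z - y)
    have hmm : m + m = x + y := by rw [hm]; exact midpoint_add_self ℝ x y
    have h1 : z - x + (z - y) = (2 : ℝ) • (z - m) := by
      rw [two_smul, show z - m + (z - m) = z + z - (m + m) by abel, hmm]; abel
    have h2 : z - x - (z - y) = y - x := by abel
    rw [h1, h2, norm_smul, Real.norm_ofNat] at hpar
    have hnx : ‖z - x‖ = dist z x := (dist_eq_norm z x).symm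
    have hny : ‖z - y‖ = dist z y := (dist_eq_norm z y).symm
    have hnm : ‖z - m‖ = dist z m := (dist_eq_norm z m).symm
    have hnyx : ‖y - x‖ = dist x y := by rw [← dist_eq_norm, dist_comm]
    rw [hnx, hny, hnm, hnyx] at hpar
    have : dist x y / 2 < dist z m := by
      nlinarith [dist_nonneg (x := z) (y := m)]
    rw [dist_comm m z]; linarith
  have hballx : m ∈ closedBall x 1 := by
    rw [mem_closedBall, hmx]; nlinarith
  have hbally : m ∈ closedBall y 1 := by
    rw [mem_closedBall, hmy]; nlinarith
  have hvx : m ∈ vor (S : Set E2) x := by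
    intro z hz hzx
    rw [hmx]
    by_cases hzy : z = y
    · rw [hzy, ← hmy]
    · exact main z hz hzx hzy
  have hvy : m ∈ vor (S : Set E2) y := by
    intro z hz hzy
    rw [hmy]
    by_cases hzx : z = x
    · rw [hzx, ← hmx]
    · exact main z hz hzx hzy
  exact ⟨⟨hvx, hballx⟩, ⟨hvy, hbally⟩, ⟨m, ⟨hvx, hballx⟩, ⟨hvy, hbally⟩⟩⟩
end
end

section
/- There exists ε₀ > 0 such that for all ε ∈ (0, ε₀] the following holds: let S ⊂ ℝ² be a finite set with pairwise distances ≥ 1 − ε, and suppose x ∈ S has six points of S at distance in [1−ε, 1+ε] from x. Then the boundary of the truncated Voronoi cell of x does not meet the boundary of Ω = ⋃_{y ∈ S} V_trunc(y), i.e. ∂Ω ∩ ∂V_trunc(x) = ∅. -/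
open Set Metric
open scoped Classical RealInnerProductSpace

noncomputable section

/-- The neighbours of `x` in `S`: points of `S \ {x}` at distance in `[1-ε, 1+ε]`. -/
def neighbors (S : Finset E2) (ε : ℝ) (x : E2) : Finset E2 :=
  (S.erase x).filter (fun y => dist x y ∈ Set.Icc (1 - ε) (1 + ε))

lemma cos_nine_tenths : (11/20 : ℝ) < Real.cos (9/10) := by
  have h := Real.cos_bound (x := 9/10) (by rw [abs_of_nonneg] <;> norm_num)
  rw [abs_le, abs_of_nonneg (by norm_num : (0:ℝ) ≤ 9/10)] at h
  nlinarith [h.1, h.2]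

lemma ge_of_cos_le {d : ℝ} (h0 : 0 ≤ d) (h1 : d ≤ Real.pi) (hc : Real.cos d ≤ 11/20) :
    9/10 ≤ d := by
  by_contra hlt
  push_neg at hlt
  have h2 : Real.cos (9/10) ≤ Real.cos d :=
    Real.cos_le_cos_of_nonneg_of_le_pi h0 (by linarith [Real.pi_gt_three]) hlt.le
  linarith [cos_nine_tenths]

lemma circ {s u : ℝ} (hs : s ∈ Set.Ioc (-Real.pi) Real.pi)
    (hu : u ∈ Set.Ioc (-Real.pi) Real.pi) (hc : Real.cos (s - u) ≤ 11/20) :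
    9/10 ≤ |s - u| ∧ |s - u| ≤ 2 * Real.pi - 9/10 := by
  have hpi := Real.pi_gt_three
  have hlt : |s - u| < 2 * Real.pi := by
    rw [abs_sub_lt_iff]
    constructor <;> linarith [hs.1, hs.2, hu.1, hu.2]
  have hcabs : Real.cos |s - u| ≤ 11/20 := by
    rcases abs_cases (s - u) with ⟨h, _⟩ | ⟨h, _⟩
    · rw [h]; exact hc
    · rw [h, Real.cos_neg]; exact hc
  rcases le_or_gt (|s - u|) Real.pi with h | h
  · exact ⟨ge_of_cos_le (abs_nonneg _) h hcabs, by linarith⟩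
  · have h2 : Real.cos (2 * Real.pi - |s - u|) ≤ 11/20 := by
      rw [Real.cos_two_pi_sub]; exact hcabs
    have h3 := ge_of_cos_le (d := 2 * Real.pi - |s - u|) (by linarith) (by linarith) h2
    constructor <;> linarith

lemma seven_angles (t : Fin 7 → ℝ) (ht : ∀ i, t i ∈ Set.Ioc (-Real.pi) Real.pi)
    (h : ∀ i j, i ≠ j → Real.cos (t i - t j) ≤ 11/20) : False := by
  set σ := Tuple.sort t with hσ
  set s : Fin 7 → ℝ := t ∘ σ with hs
  have mono : Monotone s := Tuple.monotone_sort t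
  have key : ∀ i j : Fin 7, i < j → 9/10 ≤ s j - s i := by
    intro i j hij
    have hne : σ j ≠ σ i := fun hh => absurd (Equiv.injective σ hh) hij.ne'
    have hb := (circ (ht (σ j)) (ht (σ i)) (h (σ j) (σ i) hne)).1
    have hm : s i ≤ s j := mono hij.le
    have : s j - s i = |t (σ j) - t (σ i)| := by
      rw [abs_of_nonneg (by simpa [hs] using sub_nonneg.mpr hm)]
      rfl
    linarith [this ▸ hb]
  have hne60 : σ 6 ≠ σ 0 := fun hh => by
    have := Equiv.injective σ hh; exact absurd this (by decide)
  have total : s 6 - s 0 ≤ 2 * Real.pi - 9/10 := by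
    have hb := (circ (ht (σ 6)) (ht (σ 0)) (h (σ 6) (σ 0) hne60)).2
    calc s 6 - s 0 ≤ |s 6 - s 0| := le_abs_self _
      _ = |t (σ 6) - t (σ 0)| := rfl
      _ ≤ 2 * Real.pi - 9/10 := hb
  have g1 := key 0 1 (by decide)
  have g2 := key 1 2 (by decide)
  have g3 := key 2 3 (by decide)
  have g4 := key 3 4 (by decide)
  have g5 := key 4 5 (by decide)
  have g6 := key 5 6 (by decide)
  have hpi := Real.pi_lt_d2
  linarith

lemma seven_complex (z : Fin 7 → ℂ) (hz : ∀ i, ‖z i‖ = 1)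
    (h : ∀ i j, i ≠ j → (9/10 : ℝ) ≤ ‖z i - z j‖ ^ 2) : False := by
  have hz0 : ∀ i, z i ≠ 0 := by
    intro i hh
    have := hz i
    rw [hh] at this
    simp at this
  apply seven_angles (fun i => (z i).arg) (fun i => Complex.arg_mem_Ioc (z i))
  intro i j hij
  have hre : ∀ k, (z k).re = Real.cos (z k).arg := by
    intro k; rw [Complex.cos_arg (hz0 k), hz k, div_one]
  have him : ∀ k, (z k).im = Real.sin (z k).arg := by
    intro k; rw [Complex.sin_arg, hz k, div_one]
  have hsq : ∀ k, (z k).re ^ 2 + (z k).im ^ 2 = 1 := by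
    intro k
    have := Complex.sq_norm (z k)
    rw [hz k, Complex.normSq_apply] at this
    nlinarith [this]
  have habs : ‖z i - z j‖ ^ 2 =
      ((z i).re - (z j).re) ^ 2 + ((z i).im - (z j).im) ^ 2 := by
    rw [Complex.sq_norm, Complex.normSq_apply, Complex.sub_re, Complex.sub_im]
    ring
  have hb := h i j hij
  rw [habs] at hb
  have : Real.cos ((z i).arg - (z j).arg)
      = (z i).re * (z j).re + (z i).im * (z j).im := by
    rw [Real.cos_sub, hre, hre, him, him]
  rw [this]
  nlinarith [hsq i, hsq j]

lemma seven_dirs (v : Fin 7 → E2) (hv : ∀ i, ‖v i‖ = 1)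
    (h : ∀ i j, i ≠ j → ⟪v i, v j⟫ ≤ (11/20 : ℝ)) : False := by
  set g := Complex.orthonormalBasisOneI.repr.symm with hg
  apply seven_complex (fun i => g (v i))
  · intro i
    rw [g.norm_map, hv]
  · intro i j hij
    have h1 : ‖g (v i) - g (v j)‖ = ‖v i - v j‖ := by
      rw [← map_sub, g.norm_map]
    rw [h1]
    have h2 : ‖v i - v j‖ ^ 2 = 2 - 2 * ⟪v i, v j⟫ := by
      rw [norm_sub_sq_real, hv i, hv j]; ring
    rw [h2]
    linarith [h i j hij]

lemma unit_inner_le {a b : E2} (ha : a ≠ 0) (hb : b ≠ 0)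
    (hip : ⟪a, b⟫ ≤ 11/20 * (‖a‖ * ‖b‖)) :
    ⟪‖a‖⁻¹ • a, ‖b‖⁻¹ • b⟫ ≤ (11/20 : ℝ) := by
  have hna : (0:ℝ) < ‖a‖ := norm_pos_iff.mpr ha
  have hnb : (0:ℝ) < ‖b‖ := norm_pos_iff.mpr hb
  rw [real_inner_smul_left, real_inner_smul_right]
  rw [show ‖a‖⁻¹ * (‖b‖⁻¹ * ⟪a, b⟫) = ⟪a, b⟫ / (‖a‖ * ‖b‖) by
    field_simp]
  rw [div_le_iff₀ (by positivity)]
  linarith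

set_option maxHeartbeats 2000000 in
/-- for sufficiently small `ε > 0`, if a point `x` of a `(1-ε)`-separated
finite set `S` has six neighbours, then the boundary of its truncated Voronoi cell does
not meet the boundary of `Ω = ⋃_{y ∈ S} V_trunc(y)`. -/
theorem interior_cell_avoids_boundary :
    ∃ ε₀ : ℝ, 0 < ε₀ ∧ ∀ ε : ℝ, 0 < ε → ε ≤ ε₀ →
      ∀ S : Finset E2, (∀ x ∈ S, ∀ y ∈ S, x ≠ y → 1 - ε ≤ dist x y) →
        ∀ x ∈ S, (neighbors S ε x).card = 6 →
          frontier (⋃ y ∈ (S : Set E2), vtrunc (S : Set E2) y) ∩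
              frontier (vtrunc (S : Set E2) x) = ∅ := by
  refine ⟨1/100, by norm_num, ?_⟩
  intro ε hε hε₀ S hsep x hxS hcard
  -- Step 1: the truncated cell is contained in a small ball
  have hsub : vtrunc (S : Set E2) x ⊆ closedBall x (92/100) := by
    rintro z ⟨hzvor, -⟩
    rw [mem_closedBall]
    by_contra hfar
    push_neg at hfar
    set e := Finset.equivFinOfCardEq hcard with he
    set y : Fin 6 → E2 := fun i => ((e.symm i : (neighbors S ε x)) : E2) with hy
    have hymem : ∀ i, y i ∈ neighbors S ε x := fun i => (e.symm i).2
    have hyS : ∀ i, y i ∈ S := by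
      intro i
      have := hymem i
      rw [neighbors, Finset.mem_filter, Finset.mem_erase] at this
      exact this.1.2
    have hynex : ∀ i, y i ≠ x := by
      intro i
      have := hymem i
      rw [neighbors, Finset.mem_filter, Finset.mem_erase] at this
      exact this.1.1
    have hyd : ∀ i, 1 - ε ≤ dist x (y i) ∧ dist x (y i) ≤ 1 + ε := by
      intro i
      have := hymem i
      rw [neighbors, Finset.mem_filter] at this
      exact ⟨this.2.1, this.2.2⟩
    have hyinj : Function.Injective y := fun i j hij => by
      apply e.symm.injective
      exact Subtype.ext hij
    set w := z - x with hwdef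
    have hw : (92:ℝ)/100 < ‖w‖ := by rwa [dist_eq_norm] at hfar
    have hwpos : (0:ℝ) < ‖w‖ := by linarith
    have hwne : w ≠ 0 := fun hh => by rw [hh, norm_zero] at hwpos; linarith
    set a : Fin 6 → E2 := fun i => y i - x with hadef
    have hane : ∀ i, a i ≠ 0 := fun i => sub_ne_zero.mpr (hynex i)
    have hna : ∀ i, 1 - ε ≤ ‖a i‖ ∧ ‖a i‖ ≤ 1 + ε := by
      intro i
      have h1 := hyd i
      rw [dist_comm, dist_eq_norm] at h1
      exact h1
    -- vor constraint: ⟪w, a i⟫ ≤ ‖a i‖²/2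
    have hvorc : ∀ i, ⟪w, a i⟫ ≤ ‖a i‖ ^ 2 / 2 := by
      intro i
      have h1 := hzvor (y i) (hyS i) (hynex i)
      rw [dist_eq_norm, dist_eq_norm] at h1
      have h2 : z - y i = w - a i := by simp only [hwdef, hadef]; abel
      rw [h2, ← hwdef] at h1
      have h3 : ‖w‖ ^ 2 ≤ ‖w - a i‖ ^ 2 :=
        pow_le_pow_left₀ (norm_nonneg _) h1 2
      have h4 : ‖w - a i‖ ^ 2 = ‖w‖ ^ 2 - 2 * ⟪w, a i⟫ + ‖a i‖ ^ 2 :=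
        norm_sub_sq_real _ _
      linarith
    -- pairwise inner bounds among the a i
    have hpair : ∀ i j : Fin 6, i ≠ j → ⟪a i, a j⟫ ≤ 11/20 * (‖a i‖ * ‖a j‖) := by
      intro i j hij
      have hyne : y i ≠ y j := fun hh => hij (hyinj hh)
      have hdij : 1 - ε ≤ dist (y i) (y j) := hsep (y i) (hyS i) (y j) (hyS j) hyne
      have hab : a i - a j = y i - y j := by simp only [hadef]; abel
      have hdn : 1 - ε ≤ ‖a i - a j‖ := by rw [hab, ← dist_eq_norm]; exact hdij
      have hiden : ‖a i - a j‖ ^ 2 = ‖a i‖ ^ 2 - 2 * ⟪a i, a j⟫ + ‖a j‖ ^ 2 :=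
        norm_sub_sq_real _ _
      have h1 := hna i
      have h2 := hna j
      have hgt : (0:ℝ) < 1 - ε := by linarith
      have hprod : (1 - ε) * (1 - ε) ≤ ‖a i‖ * ‖a j‖ :=
        mul_le_mul h1.1 h2.1 hgt.le (hgt.le.trans h1.1)
      have hsq' : (1 - ε) ^ 2 ≤ ‖a i - a j‖ ^ 2 :=
        pow_le_pow_left₀ hgt.le hdn 2
      have ha2 : ‖a i‖ ^ 2 ≤ (1 + ε) ^ 2 :=
        pow_le_pow_left₀ (norm_nonneg _) h1.2 2
      have hb2 : ‖a j‖ ^ 2 ≤ (1 + ε) ^ 2 :=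
        pow_le_pow_left₀ (norm_nonneg _) h2.2 2
      have hkey : 2 * (1 + ε) ^ 2 - (1 - ε) ^ 2 ≤ 11/10 * ((1 - ε) * (1 - ε)) := by
        nlinarith [hε, hε₀, sq_nonneg ε]
      nlinarith [hiden, hprod, hsq', ha2, hb2, hkey]
    -- assemble seven unit vectors
    set v : Fin 7 → E2 :=
      Fin.cons (‖w‖⁻¹ • w) (fun i => ‖a i‖⁻¹ • a i) with hv
    apply seven_dirs v
    · intro i
      refine Fin.cases ?_ ?_ i
      · rw [hv, Fin.cons_zero]; exact norm_smul_inv_norm (𝕜 := ℝ) hwne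
      · intro k; rw [hv, Fin.cons_succ]; exact norm_smul_inv_norm (𝕜 := ℝ) (hane k)
    · intro i j hij
      have hwa : ∀ k : Fin 6, ⟪‖w‖⁻¹ • w, ‖a k‖⁻¹ • a k⟫ ≤ (11/20 : ℝ) := by
        intro k
        apply unit_inner_le hwne (hane k)
        have h1 := hvorc k
        have h2 := (hna k).2
        have h3 : (0:ℝ) ≤ ‖a k‖ := norm_nonneg _
        nlinarith [h1, h2, h3, hw, hε₀, hε]
      obtain rfl | ⟨ki, rfl⟩ := i.eq_zero_or_eq_succ <;>
        obtain rfl | ⟨kj, rfl⟩ := j.eq_zero_or_eq_succ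
      · exact absurd rfl hij
      · rw [hv, Fin.cons_zero, Fin.cons_succ]; exact hwa kj
      · rw [hv, Fin.cons_zero, Fin.cons_succ, real_inner_comm]; exact hwa ki
      · rw [hv, Fin.cons_succ, Fin.cons_succ]
        have hkij : ki ≠ kj := fun hh => hij (by rw [hh])
        exact unit_inner_le (hane ki) (hane kj) (hpair ki kj hkij)
  -- Step 2: frontier of the cell is inside the open unit ball around x
  have hfr : frontier (vtrunc (S : Set E2) x) ⊆ ball x 1 := by
    intro p hp
    have h1 : p ∈ closure (vtrunc (S : Set E2) x) := hp.1
    have h2 : p ∈ closedBall x (92/100) :=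
      closure_minimal hsub isClosed_closedBall h1
    exact closedBall_subset_ball (by norm_num) h2
  -- Step 3: the open unit ball around x is in Ω
  have hball : ball x 1 ⊆ ⋃ y ∈ (S : Set E2), vtrunc (S : Set E2) y := by
    intro p hp
    obtain ⟨m, hmS, hmin⟩ := S.exists_min_image (fun q => dist p q) ⟨x, hxS⟩
    rw [mem_iUnion₂]
    refine ⟨m, hmS, ?_, ?_⟩
    · intro q hqS hq
      exact hmin q hqS
    · rw [mem_closedBall]
      exact ((hmin x hxS).trans_lt (mem_ball.mp hp)).le
  -- Step 4: conclude
  ext p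
  simp only [Set.mem_inter_iff, Set.mem_empty_iff_false, iff_false, not_and]
  intro hpΩ hpV
  have hint : p ∈ interior (⋃ y ∈ (S : Set E2), vtrunc (S : Set E2) y) :=
    interior_maximal hball isOpen_ball (hfr hpV)
  exact hpΩ.2 hint
end
end

section
/- There exists ε₀ > 0 such that for all ε ∈ (0, ε₀] the following holds: let S ⊂ ℝ² be a finite set with pairwise distances ≥ 1 − ε that is connected with parameter 1 + ε (any two points of S are joined by a chain in S with consecutive distances ≤ 1 + ε). Let ∂S = {x ∈ S : x has fewer than six points of S at distance in [1−ε, 1+ε]}. Then diam S ≤ π · #∂S. -/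
open Set Metric
open scoped Classical

noncomputable section

/-- The boundary atoms: points of `S` with fewer than six neighbours. -/
def bdryAtoms (S : Finset E2) (ε : ℝ) : Finset E2 :=
  S.filter (fun x => (neighbors S ε x).card < 6)

/-- `S` is connected with parameter `β`: any two of its points are joined by a chain of
points of `S` with consecutive distances `≤ β`. -/
def ChainConnected (β : ℝ) (S : Finset E2) : Prop :=
  ∀ x ∈ S, ∀ y ∈ S, ∃ (n : ℕ) (c : ℕ → E2),
    c 0 = x ∧ c n = y ∧ (∀ i ≤ n, c i ∈ S) ∧ ∀ i < n, dist (c (i + 1)) (c i) ≤ β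


set_option maxHeartbeats 1000000

lemma dist_sq (x y : E2) : dist x y ^ 2 = (x 0 - y 0)^2 + (x 1 - y 1)^2 := by
  rw [EuclideanSpace.dist_eq]
  rw [Real.sq_sqrt (by positivity)]
  simp [Fin.sum_univ_two, Real.dist_eq, sq_abs]

lemma sqrt_step {c T : ℝ} (hc : 0 ≤ c) (hT : 0 ≤ T) (h : c^2 ≤ T^2) : c ≤ T := by
  nlinarith [h, hc, hT]

/-- Core computation for two points in a narrow sector. -/
lemma sector_diam_core (P R G A B A' B' n n' d : ℝ)
    (hPnn : 0 ≤ P) (hG2 : 0 < G^2) (hPP : G^2 + R^2 = P*P) (hR : 0.505*P ≤ R)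
    (hA : 0 ≤ A) (hB : 0 ≤ B) (hA' : 0 ≤ A') (hB' : 0 ≤ B')
    (e2 : G^2*n = P*A^2 + P*B^2 + 2*R*(A*B))
    (e2' : G^2*n' = P*A'^2 + P*B'^2 + 2*R*(A'*B'))
    (e1 : G^2*d = P*(A*A') + P*(B*B') + R*(A*B'+A'*B))
    (hn1 : 0.998 ≤ n) (hn2 : n ≤ 1.0021)
    (hn1' : 0.998 ≤ n') (hn2' : n' ≤ 1.0021) :
    n + n' - 2*d ≤ 0.997 := by
  have hP0 : 0 < P := by
    rcases hPnn.lt_or_eq with h | h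
    · exact h
    · exfalso; nlinarith [sq_nonneg R]
  have hR0 : 0 ≤ R := le_trans (by nlinarith) hR
  have hRP : R ≤ P := by nlinarith [sq_nonneg (P - R), sq_nonneg (P + R), sq_nonneg G]
  have s1 : 0.998*G^2 ≤ P*(A+B)^2 := by
    nlinarith [mul_nonneg (mul_nonneg hA hB) (sub_nonneg.mpr hRP),
      mul_le_mul_of_nonneg_left hn1 hG2.le]
  have s1' : 0.998*G^2 ≤ P*(A'+B')^2 := by
    nlinarith [mul_nonneg (mul_nonneg hA' hB') (sub_nonneg.mpr hRP),
      mul_le_mul_of_nonneg_left hn1' hG2.le]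
  have hAB : (0:ℝ) ≤ A + B := add_nonneg hA hB
  have hAB' : (0:ℝ) ≤ A' + B' := add_nonneg hA' hB'
  have hT0 : 0 ≤ P*((A+B)*(A'+B')) := mul_nonneg hPnn (mul_nonneg hAB hAB')
  have key : (0.998*G^2)^2 ≤ (P*((A+B)*(A'+B')))^2 := by
    have := mul_le_mul s1 s1' (by positivity) (by positivity)
    nlinarith [this]
  have s2 : 0.998*G^2 ≤ P*((A+B)*(A'+B')) := sqrt_step (by positivity) hT0 key
  have s3 : R*((A+B)*(A'+B')) ≤ G^2*d := by
    nlinarith [mul_nonneg (mul_nonneg hA hA') (sub_nonneg.mpr hRP),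
      mul_nonneg (mul_nonneg hB hB') (sub_nonneg.mpr hRP)]
  have s4 : 0.998*R*G^2 ≤ P*(G^2*d) := by
    calc 0.998*R*G^2 = R*(0.998*G^2) := by ring
    _ ≤ R*(P*((A+B)*(A'+B'))) := mul_le_mul_of_nonneg_left s2 hR0
    _ = P*(R*((A+B)*(A'+B'))) := by ring
    _ ≤ P*(G^2*d) := mul_le_mul_of_nonneg_left s3 hPnn
  have s5 : 0.998*0.505 ≤ d := by
    have h505 : P*(G^2*(0.998*0.505)) ≤ P*(G^2*d) := by
      nlinarith [mul_le_mul_of_nonneg_left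
        (mul_le_mul_of_nonneg_left hR (by norm_num : (0:ℝ) ≤ 0.998)) hG2.le]
    exact le_of_mul_le_mul_left (le_of_mul_le_mul_left h505 hP0) hG2
  linarith

/-- Two points of the unit-ish annulus lying in a common closed sector of angular
width < 60° (edges `g`, `h` of equal norm) have squared distance ≤ 0.997. -/
lemma sector_diam (gx gy hx hy dx dy dx' dy' : ℝ)
    (hP : hx^2 + hy^2 = gx^2 + gy^2)
    (hG : 0 < gx*hy - gy*hx)
    (hR : 0.505*(gx^2+gy^2) ≤ gx*hx + gy*hy)
    (h1 : 0 ≤ dx*hy - dy*hx) (h2 : 0 ≤ gx*dy - gy*dx)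
    (h1' : 0 ≤ dx'*hy - dy'*hx) (h2' : 0 ≤ gx*dy' - gy*dx')
    (hn1 : 0.998 ≤ dx^2+dy^2) (hn2 : dx^2+dy^2 ≤ 1.0021)
    (hn1' : 0.998 ≤ dx'^2+dy'^2) (hn2' : dx'^2+dy'^2 ≤ 1.0021) :
    (dx-dx')^2 + (dy-dy')^2 ≤ 0.997 := by
  have main : (dx^2+dy^2) + (dx'^2+dy'^2) - 2*(dx*dx'+dy*dy') ≤ 0.997 := by
    refine sector_diam_core (gx^2+gy^2) (gx*hx+gy*hy) (gx*hy-gy*hx)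
      (dx*hy-dy*hx) (gx*dy-gy*dx) (dx'*hy-dy'*hx) (gx*dy'-gy*dx')
      (dx^2+dy^2) (dx'^2+dy'^2) (dx*dx'+dy*dy')
      (by positivity) (by positivity) ?_ hR h1 h2 h1' h2' ?_ ?_ ?_ hn1 hn2 hn1' hn2'
    · linear_combination (gx^2+gy^2) * hP
    · linear_combination (gx*dy-gy*dx)^2 * hP
    · linear_combination (gx*dy'-gy*dx')^2 * hP
    · linear_combination ((gx*dy-gy*dx)*(gx*dy'-gy*dx')) * hP
  nlinarith [main]

lemma sector_comp_core (P R G A B gy hy cc dy n : ℝ)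
    (hPnn : 0 ≤ P) (hG : 0 < G) (hPP : G^2 + R^2 = P*P)
    (hA : 0 ≤ A) (hB : 0 ≤ B)
    (e2 : G^2*n = P*A^2 + P*B^2 + 2*R*(A*B)) (hn : 0.998 ≤ n)
    (ecy : G*dy = A*gy + B*hy)
    (hcg : cc ≤ gy) (hch : cc ≤ hy) (hc0 : 0 ≤ cc) (hcP : P ≤ 24.9*cc^2) :
    1/5 ≤ dy := by
  have hG2 : 0 < G^2 := by positivity
  have hP0 : 0 < P := by
    rcases hPnn.lt_or_eq with h | h
    · exact h
    · exfalso; nlinarith [sq_nonneg R]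
  have hRP : R ≤ P := by nlinarith [sq_nonneg (P - R), sq_nonneg (P + R)]
  have hAB : (0:ℝ) ≤ A + B := add_nonneg hA hB
  have s1 : 0.998*G^2 ≤ P*(A+B)^2 := by
    nlinarith [mul_nonneg (mul_nonneg hA hB) (sub_nonneg.mpr hRP),
      mul_le_mul_of_nonneg_left hn hG2.le]
  have s6 : (0.2*G)^2 ≤ (cc*(A+B))^2 := by
    nlinarith [s1, mul_le_mul_of_nonneg_right hcP (sq_nonneg (A+B))]
  have s7 : 0.2*G ≤ cc*(A+B) := sqrt_step (by positivity) (mul_nonneg hc0 hAB) s6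
  have s8 : cc*(A+B) ≤ G*dy := by
    nlinarith [mul_le_mul_of_nonneg_left hcg hA, mul_le_mul_of_nonneg_left hch hB]
  have : G*(1/5) ≤ G*dy := by linarith
  have := le_of_mul_le_mul_left this hG
  linarith

/-- instantiated component bound for a sector with edges g,h of equal norms. -/
lemma sector_component (gx gy hx hy dx dy cc : ℝ)
    (hP : hx^2 + hy^2 = gx^2 + gy^2)
    (hG : 0 < gx*hy - gy*hx)
    (h1 : 0 ≤ dx*hy - dy*hx) (h2 : 0 ≤ gx*dy - gy*dx)
    (hn : 0.998 ≤ dx^2+dy^2)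
    (hcg : cc ≤ gy) (hch : cc ≤ hy) (hc0 : 0 ≤ cc) (hcP : gx^2+gy^2 ≤ 24.9*cc^2) :
    1/5 ≤ dy := by
  refine sector_comp_core (gx^2+gy^2) (gx*hx+gy*hy) (gx*hy-gy*hx)
    (dx*hy-dy*hx) (gx*dy-gy*dx) gy hy cc dy (dx^2+dy^2)
    (by positivity) hG ?_ h1 h2 ?_ hn (by ring) hcg hch hc0 hcP
  · linear_combination (gx^2+gy^2) * hP
  · linear_combination (gx*dy-gy*dx)^2 * hP

/-- The six sectors determined by the chosen integer vectors cover the plane. -/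
lemma cover (dx dy : ℝ) :
    (0 ≤ (-43)*dy - 189*dx ∧ (-189)*dy - 43*dx ≤ 0) ∨
    (0 ≤ (-189)*dy - 43*dx ∧ (-133)*dy + 141*dx ≤ 0) ∨
    (0 ≤ (-133)*dy + 141*dx ∧ 51*dy + 187*dx ≤ 0) ∨
    (0 ≤ 51*dy + 187*dx ∧ 187*dy + 51*dx ≤ 0) ∨
    (0 ≤ 187*dy + 51*dx ∧ 141*dy - 133*dx ≤ 0) ∨
    (0 ≤ 141*dy - 133*dx ∧ (-43)*dy - 189*dx ≤ 0) := by
  rcases le_or_gt 0 ((-43)*dy - 189*dx) with h0 | h0 <;>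
  rcases le_or_gt 0 ((-189)*dy - 43*dx) with h1 | h1 <;>
  rcases le_or_gt 0 ((-133)*dy + 141*dx) with h2 | h2 <;>
  rcases le_or_gt 0 (51*dy + 187*dx) with h3 | h3 <;>
  rcases le_or_gt 0 (187*dy + 51*dx) with h4 | h4 <;>
  rcases le_or_gt 0 (141*dy - 133*dx) with h5 | h5 <;>
  first
  | exact Or.inl ⟨by linarith, by linarith⟩
  | exact Or.inr (Or.inl ⟨by linarith, by linarith⟩)
  | exact Or.inr (Or.inr (Or.inl ⟨by linarith, by linarith⟩))
  | exact Or.inr (Or.inr (Or.inr (Or.inl ⟨by linarith, by linarith⟩)))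
  | exact Or.inr (Or.inr (Or.inr (Or.inr (Or.inl ⟨by linarith, by linarith⟩))))
  | exact Or.inr (Or.inr (Or.inr (Or.inr (Or.inr ⟨by linarith, by linarith⟩))))

/-- If `c` has at least 6 points of the annulus around it, pairwise `(1-ε)`-separated,
then one of them lies in the upper-left cone: `q`-gain ≥ 1/5 and `p`-drop ≥ 1/5. -/
lemma cone_exists (ε : ℝ) (hε0 : 0 < ε) (hε : ε ≤ 1/1000)
    (p q : E2 → ℝ)
    (hpq : ∀ y z : E2, (p y - p z)^2 + (q y - q z)^2 = dist y z ^ 2)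
    (c : E2) (N : Finset E2)
    (hcard : 6 ≤ N.card)
    (hd : ∀ y ∈ N, 1 - ε ≤ dist c y ∧ dist c y ≤ 1 + ε)
    (hsep : ∀ y ∈ N, ∀ z ∈ N, y ≠ z → 1 - ε ≤ dist y z) :
    ∃ y ∈ N, 1/5 ≤ q y - q c ∧ 1/5 ≤ p c - p y := by
  by_contra hcon
  push_neg at hcon
  set dx : E2 → ℝ := fun w => p w - p c with hdx
  set dy : E2 → ℝ := fun w => q w - q c with hdy
  have hnb : ∀ y ∈ N, 0.998 ≤ (dx y)^2 + (dy y)^2 ∧ (dx y)^2 + (dy y)^2 ≤ 1.0021 := by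
    intro y hy
    have h := hd y hy
    have hq := hpq y c
    have hcy : dist c y = dist y c := dist_comm c y
    have h1 : (1-ε)^2 ≤ dist y c ^2 := by
      rw [← hcy]; exact pow_le_pow_left₀ (by linarith) h.1 2
    have h2 : dist y c ^2 ≤ (1+ε)^2 := by
      rw [← hcy]; exact pow_le_pow_left₀ dist_nonneg h.2 2
    constructor
    · simp only [hdx, hdy]; nlinarith [hq, h1]
    · simp only [hdx, hdy]; nlinarith [hq, h2]
  -- no point of N in the cone
  have hnc : ∀ y ∈ N, ¬(0 ≤ (-43)*(dy y) - 189*(dx y) ∧ (-189)*(dy y) - 43*(dx y) ≤ 0) := by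
    rintro y hy ⟨hc0, hc1⟩
    have hn := (hnb y hy).1
    have comp1 : 1/5 ≤ dy y := by
      refine sector_component (-43) 189 (-189) 43 (dx y) (dy y) 43
        (by norm_num) (by norm_num) (by linarith) (by linarith) hn
        (by norm_num) (by norm_num) (by norm_num) (by norm_num)
    have comp2 : 1/5 ≤ -(dx y) := by
      refine sector_component 189 43 43 189 (dy y) (-(dx y)) 43
        (by norm_num) (by norm_num) (by linarith) (by linarith) (by nlinarith [hn])
        (by norm_num) (by norm_num) (by norm_num) (by norm_num)
    have := hcon y hy (by simpa [hdy] using comp1)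
    simp only [hdx] at comp2
    linarith
  -- classification into the five remaining sectors
  set carr : ℕ → E2 → ℝ := fun i w =>
    match i with
    | 0 => (-189)*(dy w) - 43*(dx w)
    | 1 => (-133)*(dy w) + 141*(dx w)
    | 2 => 51*(dy w) + 187*(dx w)
    | 3 => 187*(dy w) + 51*(dx w)
    | 4 => 141*(dy w) - 133*(dx w)
    | _ => (-43)*(dy w) - 189*(dx w) with hcarr
  set F : E2 → ℕ := fun w =>
    if 0 ≤ carr 0 w ∧ carr 1 w ≤ 0 then 0
    else if 0 ≤ carr 1 w ∧ carr 2 w ≤ 0 then 1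
    else if 0 ≤ carr 2 w ∧ carr 3 w ≤ 0 then 2
    else if 0 ≤ carr 3 w ∧ carr 4 w ≤ 0 then 3
    else 4 with hF
  have hkey : ∀ w ∈ N, (0 ≤ carr (F w) w ∧ carr (F w + 1) w ≤ 0) ∧ F w < 5 := by
    intro w hw
    have hcov := cover (dx w) (dy w)
    have hnotc := hnc w hw
    simp only [hF]
    split_ifs with h1 h2 h3 h4
    · exact ⟨h1, by norm_num⟩
    · exact ⟨h2, by norm_num⟩
    · exact ⟨h3, by norm_num⟩
    · exact ⟨h4, by norm_num⟩
    · refine ⟨?_, by norm_num⟩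
      simp only [hcarr] at h1 h2 h3 h4 ⊢
      rcases hcov with h | h | h | h | h | h
      · exact absurd h hnotc
      · exact absurd h (by tauto)
      · exact absurd h (by tauto)
      · exact absurd h (by tauto)
      · exact absurd h (by tauto)
      · exact h
  -- pigeonhole
  have hpig : ∃ y ∈ N, ∃ z ∈ N, y ≠ z ∧ F y = F z := by
    have hmaps : ∀ w ∈ N, F w ∈ Finset.range 5 := by
      intro w hw; exact Finset.mem_range.mpr (hkey w hw).2
    have hc5 : (Finset.range 5).card < N.card := by
      rw [Finset.card_range]; omega
    exact Finset.exists_ne_map_eq_of_card_lt_of_maps_to hc5 hmaps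
  obtain ⟨y, hy, z, hz, hne, hFeq⟩ := hpig
  obtain ⟨⟨hy1, hy2⟩, hFy5⟩ := hkey y hy
  obtain ⟨⟨hz1, hz2⟩, _⟩ := hkey z hz
  rw [hFeq] at hy1 hy2
  -- the pair y z lies in a common sector, hence is too close
  have hny := hnb y hy
  have hnz := hnb z hz
  have hclose : (dx y - dx z)^2 + (dy y - dy z)^2 ≤ 0.997 := by
    set i := F z with hi
    interval_cases i
    · exact sector_diam (-189) 43 (-133) (-141) (dx y) (dy y) (dx z) (dy z)
        (by norm_num) (by norm_num) (by norm_num)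
        (by simp only [hcarr] at hy2; linarith) (by simp only [hcarr] at hy1; linarith)
        (by simp only [hcarr] at hz2; linarith) (by simp only [hcarr] at hz1; linarith)
        hny.1 hny.2 hnz.1 hnz.2
    · exact sector_diam (-133) (-141) 51 (-187) (dx y) (dy y) (dx z) (dy z)
        (by norm_num) (by norm_num) (by norm_num)
        (by simp only [hcarr] at hy2; linarith) (by simp only [hcarr] at hy1; linarith)
        (by simp only [hcarr] at hz2; linarith) (by simp only [hcarr] at hz1; linarith)
        hny.1 hny.2 hnz.1 hnz.2
    · exact sector_diam 51 (-187) 187 (-51) (dx y) (dy y) (dx z) (dy z)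
        (by norm_num) (by norm_num) (by norm_num)
        (by simp only [hcarr] at hy2; linarith) (by simp only [hcarr] at hy1; linarith)
        (by simp only [hcarr] at hz2; linarith) (by simp only [hcarr] at hz1; linarith)
        hny.1 hny.2 hnz.1 hnz.2
    · exact sector_diam 187 (-51) 141 133 (dx y) (dy y) (dx z) (dy z)
        (by norm_num) (by norm_num) (by norm_num)
        (by simp only [hcarr] at hy2; linarith) (by simp only [hcarr] at hy1; linarith)
        (by simp only [hcarr] at hz2; linarith) (by simp only [hcarr] at hz1; linarith)
        hny.1 hny.2 hnz.1 hnz.2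
    · exact sector_diam 141 133 (-43) 189 (dx y) (dy y) (dx z) (dy z)
        (by norm_num) (by norm_num) (by norm_num)
        (by simp only [hcarr] at hy2; linarith) (by simp only [hcarr] at hy1; linarith)
        (by simp only [hcarr] at hz2; linarith) (by simp only [hcarr] at hz1; linarith)
        hny.1 hny.2 hnz.1 hnz.2
  have hsepyz := hsep y hy z hz hne
  have hq := hpq y z
  have h1 : (1-ε)^2 ≤ dist y z ^2 := pow_le_pow_left₀ (by linarith) hsepyz 2
  have : (dx y - dx z)^2 + (dy y - dy z)^2 = dist y z ^ 2 := by
    simp only [hdx, hdy]; linear_combination hq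
  nlinarith [hclose, h1, this]

lemma nat_ivt (s : ℕ → ℕ) : ∀ n, (∀ i < n, s (i+1) ≤ s i + 1) → ∀ k, s 0 ≤ k → k ≤ s n →
    ∃ i ≤ n, s i = k := by
  intro n
  induction n with
  | zero => intro _ k h1 h2; exact ⟨0, le_refl _, by omega⟩
  | succ m ih =>
    intro hstep k h0 hn
    by_cases hk : k ≤ s m
    · obtain ⟨i, hi, he⟩ := ih (fun i hi => hstep i (by omega)) k h0 hk
      exact ⟨i, by omega, he⟩
    · have := hstep m (by omega)
      exact ⟨m+1, le_refl _, by omega⟩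


/-- for sufficiently small `ε > 0`, any `(1-ε)`-separated, `(1+ε)`-connected
finite set `S` satisfies `diam S ≤ π · #∂S`. -/
theorem diam_le_boundary_count :
    ∃ ε₀ : ℝ, 0 < ε₀ ∧ ∀ ε : ℝ, 0 < ε → ε ≤ ε₀ →
      ∀ S : Finset E2, (∀ x ∈ S, ∀ y ∈ S, x ≠ y → 1 - ε ≤ dist x y) →
        ChainConnected (1 + ε) S →
        Metric.diam (S : Set E2) ≤ Real.pi * (bdryAtoms S ε).card := by
  refine ⟨1/1000, by norm_num, ?_⟩
  intro ε hε0 hε S hsepS hconn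
  have hpi3 : (3:ℝ) < Real.pi := Real.pi_gt_three
  rcases S.eq_empty_or_nonempty with rfl | hSne
  · simp only [Finset.coe_empty, Metric.diam_empty]
    positivity
  obtain ⟨pr, hpr, hmax⟩ := (S ×ˢ S).exists_max_image (fun pr => dist pr.1 pr.2)
    (hSne.product hSne)
  obtain ⟨a, b⟩ := pr
  obtain ⟨ha, hb⟩ := Finset.mem_product.mp hpr
  obtain ⟨D, hD⟩ : ∃ d : ℝ, d = dist a b := ⟨_, rfl⟩
  have hDmax : ∀ x ∈ S, ∀ y ∈ S, dist x y ≤ D := by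
    intro x hx y hy
    rw [hD]
    exact hmax (x, y) (Finset.mem_product.mpr ⟨hx, hy⟩)
  have hDnn : 0 ≤ D := le_of_le_of_eq dist_nonneg hD.symm
  have hdiam : Metric.diam (S : Set E2) ≤ D :=
    Metric.diam_le_of_forall_dist_le hDnn (fun x hx y hy => hDmax x hx y hy)
  suffices hDb : D ≤ Real.pi * (bdryAtoms S ε).card by linarith
  rcases eq_or_lt_of_le hDnn with hD0 | hD0
  · rw [← hD0]; positivity
  -- orthonormal frame along a → b
  obtain ⟨u0, hu0⟩ : ∃ u : ℝ, u = (b 0 - a 0)/D := ⟨_, rfl⟩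
  obtain ⟨u1, hu1⟩ : ∃ u : ℝ, u = (b 1 - a 1)/D := ⟨_, rfl⟩
  have hab2 : D^2 = (b 0 - a 0)^2 + (b 1 - a 1)^2 := by
    rw [hD, dist_sq a b]; ring
  have hu : u0^2 + u1^2 = 1 := by
    rw [hu0, hu1]; field_simp; linarith [hab2]
  obtain ⟨p, hp⟩ : ∃ p : E2 → ℝ, p = fun z => u0*(z 0 - a 0) + u1*(z 1 - a 1) := ⟨_, rfl⟩
  obtain ⟨q, hq⟩ : ∃ q : E2 → ℝ, q = fun z => -u1*(z 0 - a 0) + u0*(z 1 - a 1) := ⟨_, rfl⟩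
  have hpq : ∀ y z : E2, (p y - p z)^2 + (q y - q z)^2 = dist y z ^ 2 := by
    intro y z
    rw [dist_sq y z, hp, hq]
    simp only
    linear_combination ((y 0 - z 0)^2 + (y 1 - z 1)^2) * hu
  have hpq' : ∀ y z : E2, ((fun w => -(p w)) y - (fun w => -(p w)) z)^2 + (q y - q z)^2
      = dist y z ^ 2 := by
    intro y z; simp only; linear_combination hpq y z
  have habs : ∀ y z : E2, |p y - p z| ≤ dist y z := by
    intro y z
    have h1 := hpq y z
    have h2 : (p y - p z)^2 ≤ dist y z^2 := by nlinarith [sq_nonneg (q y - q z)]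
    calc |p y - p z| = Real.sqrt ((p y - p z)^2) := (Real.sqrt_sq_eq_abs _).symm
    _ ≤ Real.sqrt (dist y z^2) := Real.sqrt_le_sqrt h2
    _ = dist y z := Real.sqrt_sq dist_nonneg
  have hpa : p a = 0 := by rw [hp]; simp
  have hpb : p b = D := by
    rw [hp]; simp only [hu0, hu1]; field_simp; linarith [hab2]
  have hprange : ∀ z ∈ S, 0 ≤ p z ∧ p z ≤ D := by
    intro z hz
    have h1 := habs z a
    have h2 := habs b z
    rw [hpa] at h1; rw [hpb] at h2
    have h3 : dist z a ≤ D := hDmax z hz a ha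
    have h4 : dist b z ≤ D := hDmax b hb z hz
    rw [abs_le] at h1 h2
    constructor <;> [linarith [h2.2]; linarith [h1.2]]
  -- slabs of width (11/10)
  obtain ⟨K, hK⟩ : ∃ K : ℕ, K = ⌊D / (11/10)⌋₊ := ⟨_, rfl⟩
  obtain ⟨idx, hidx⟩ : ∃ f : E2 → ℕ, f = fun z => min K ⌊p z / (11/10)⌋₊ := ⟨_, rfl⟩
  have hidxle : ∀ z, idx z ≤ K := by
    intro z; rw [hidx]; exact min_le_left _ _
  have hmono : ∀ y z : E2, p y ≤ p z → idx y ≤ idx z := by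
    intro y z hyz
    have h1 : ⌊p y / (11/10)⌋₊ ≤ ⌊p z / (11/10)⌋₊ :=
      Nat.floor_le_floor ((div_le_div_iff_of_pos_right (by norm_num)).mpr hyz)
    rw [hidx]; simp only; omega
  have hstep : ∀ y z : E2, 0 ≤ p z → p y ≤ p z + (11/10) → idx y ≤ idx z + 1 := by
    intro y z hz0 hyz
    have hdiv : p y / (11/10) ≤ p z / (11/10) + 1 := by
      rw [div_add' _ _ _ (by norm_num : ((11/10):ℝ) ≠ 0)]
      exact (div_le_div_iff_of_pos_right (by norm_num)).mpr (by linarith)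
    have h1 : ⌊p y / (11/10)⌋₊ ≤ ⌊p z / (11/10) + 1⌋₊ := Nat.floor_le_floor hdiv
    rw [Nat.floor_add_one (by positivity)] at h1
    rw [hidx]; simp only; omega
  -- locating a point from its index
  have hloc1 : ∀ z : E2, ∀ k : ℕ, idx z = k → (k:ℝ) * (11/10) ≤ p z ∨ k = 0 := by
    intro z k hk
    rcases Nat.eq_zero_or_pos k with h0 | hpos
    · exact Or.inr h0
    · left
      have : k ≤ ⌊p z / (11/10)⌋₊ := by rw [hidx] at hk; simp only at hk; omega
      have h2 : (k:ℝ) ≤ p z / (11/10) := by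
        rcases le_or_gt 0 (p z / (11/10)) with hge | hlt
        · exact (Nat.le_floor_iff hge).mp this
        · have : ⌊p z / (11/10)⌋₊ = 0 := Nat.floor_of_nonpos hlt.le
          omega
      nlinarith
  have hloc2 : ∀ z : E2, ∀ k : ℕ, idx z = k → k < K → p z < ((k:ℝ)+1) * (11/10) := by
    intro z k hk hkK
    have hfz : ⌊p z / (11/10)⌋₊ = k := by rw [hidx] at hk; simp only at hk; omega
    have := Nat.lt_floor_add_one (p z / (11/10))
    rw [hfz] at this
    nlinarith
  have hidxa : idx a = 0 := by
    rw [hidx]; simp only [hpa]; norm_num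
  have hidxb : idx b = K := by
    rw [hidx]; simp only [hpb, hK]; omega
  -- every slab is nonempty, via the chain from a to b
  have hslab : ∀ k ≤ K, ∃ x ∈ S, idx x = k := by
    intro k hk
    obtain ⟨n, ch, hch0, hchn, hchS, hchstep⟩ := hconn a ha b hb
    have hstepseq : ∀ i < n, idx (ch (i+1)) ≤ idx (ch i) + 1 := by
      intro i hi
      have hd := hchstep i hi
      have habsp := habs (ch (i+1)) (ch i)
      have h0 : 0 ≤ p (ch i) := (hprange (ch i) (hchS i hi.le)).1
      refine hstep _ _ h0 ?_
      rw [abs_le] at habsp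
      have h9 : dist (ch (i+1)) (ch i) ≤ (11/10) := by linarith only [hd, hε]
      linarith only [habsp.2, h9]
    obtain ⟨i, hin, hie⟩ := nat_ivt (fun i => idx (ch i)) n hstepseq k
      (by show idx (ch 0) ≤ k; rw [hch0, hidxa]; omega)
      (by show k ≤ idx (ch n); rw [hchn, hidxb]; omega)
    exact ⟨ch i, hchS i hin, hie⟩
  -- the top point of each slab
  have hxk : ∀ k : ℕ, ∃ x, k ≤ K → x ∈ S ∧ idx x = k ∧ ∀ y ∈ S, idx y = k → q y ≤ q x := by
    intro k
    by_cases hk : k ≤ K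
    · obtain ⟨x0, hx0⟩ := hslab k hk
      have hne : (S.filter (fun x => idx x = k)).Nonempty :=
        ⟨x0, Finset.mem_filter.mpr ⟨hx0.1, hx0.2⟩⟩
      obtain ⟨x, hxmem, hxmax⟩ := (S.filter (fun x => idx x = k)).exists_max_image q hne
      obtain ⟨hxS, hxidx⟩ := Finset.mem_filter.mp hxmem
      exact ⟨x, fun _ => ⟨hxS, hxidx,
        fun y hy hiy => hxmax y (Finset.mem_filter.mpr ⟨hy, hiy⟩)⟩⟩
    · exact ⟨a, fun h => absurd h hk⟩
  choose xk hxk using hxk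
  -- a non-atom slab-top forces both adjacent slab-tops to be higher
  have hprop : ∀ k ≤ K, xk k ∉ bdryAtoms S ε →
      (1 ≤ k ∧ q (xk k) + 1/5 ≤ q (xk (k-1))) ∧ (k < K → q (xk k) + 1/5 ≤ q (xk (k+1))) := by
    intro k hk hnotatom
    obtain ⟨hxS, hxi, hxmax⟩ := hxk k hk
    have hcard : 6 ≤ (neighbors S ε (xk k)).card := by
      by_contra hcd
      exact hnotatom (Finset.mem_filter.mpr ⟨hxS, by omega⟩)
    obtain ⟨N, hN⟩ : ∃ N, N = neighbors S ε (xk k) := ⟨_, rfl⟩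
    rw [← hN] at hcard
    have hNS : ∀ y ∈ N, y ∈ S ∧ y ≠ xk k := by
      intro y hy
      rw [hN, neighbors, Finset.mem_filter, Finset.mem_erase] at hy
      exact ⟨hy.1.2, hy.1.1⟩
    have hNd : ∀ y ∈ N, 1 - ε ≤ dist (xk k) y ∧ dist (xk k) y ≤ 1 + ε := by
      intro y hy
      rw [hN, neighbors, Finset.mem_filter] at hy
      exact ⟨hy.2.1, hy.2.2⟩
    have hNsep : ∀ y ∈ N, ∀ z ∈ N, y ≠ z → 1 - ε ≤ dist y z := by
      intro y hy z hz hne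
      exact hsepS y (hNS y hy).1 z (hNS z hz).1 hne
    have hNabs : ∀ y ∈ N, |p y - p (xk k)| ≤ (11/10) := by
      intro y hy
      have h1 := habs y (xk k)
      have h2 := (hNd y hy).2
      rw [dist_comm] at h2
      linarith
    constructor
    · -- left cone
      obtain ⟨y, hyN, hyq, hyp⟩ := cone_exists ε hε0 hε p q hpq (xk k) N hcard hNd hNsep
      have hyS := (hNS y hyN).1
      have hidxy_le : idx y ≤ k := hxi ▸ hmono y (xk k) (by linarith)
      have hidxy_ge : k ≤ idx y + 1 := by
        have := hstep (xk k) y (hprange y hyS).1 (by have := hNabs y hyN; rw [abs_le] at this; linarith)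
        omega
      have hidxy_ne : idx y ≠ k := by
        intro he
        have h9 := hxmax y hyS he
        linarith only [h9, hyq]
      have hidxy : idx y = k - 1 ∧ 1 ≤ k := by omega
      obtain ⟨hxS', hxi', hxmax'⟩ := hxk (k-1) (by omega)
      have h9 := hxmax' y hyS hidxy.1
      exact ⟨hidxy.2, by linarith only [h9, hyq]⟩
    · -- right cone
      intro hkK
      obtain ⟨y, hyN, hyq, hyp⟩ := cone_exists ε hε0 hε (fun w => -(p w)) q hpq'
        (xk k) N hcard hNd hNsep
      have hyS := (hNS y hyN).1
      have hidxy_ge : k ≤ idx y := hxi ▸ hmono (xk k) y (by linarith)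
      have hidxy_le : idx y ≤ k + 1 := by
        refine le_trans (hstep y (xk k) ?_ ?_) (by omega)
        · exact (hprange (xk k) hxS).1
        · have := hNabs y hyN; rw [abs_le] at this; linarith [this.1]
      have hidxy_ne : idx y ≠ k := by
        intro he
        have h9 := hxmax y hyS he
        linarith only [h9, hyq]
      have hidxy : idx y = k + 1 := by omega
      obtain ⟨hxS', hxi', hxmax'⟩ := hxk (k+1) (by omega)
      have h9 := hxmax' y hyS hidxy
      linarith only [h9, hyq]
  -- the set of atom slabs
  obtain ⟨A, hA⟩ : ∃ A, A = (Finset.range (K+1)).filter (fun k => xk k ∈ bdryAtoms S ε) := ⟨_, rfl⟩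
  have h0A : 0 ∈ A := by
    rw [hA, Finset.mem_filter, Finset.mem_range]
    refine ⟨by omega, ?_⟩
    by_contra h0
    have := (hprop 0 (by omega) h0).1
    omega
  have hpairA : ∀ k, k + 1 ≤ K → k ∈ A ∨ (k+1) ∈ A := by
    intro k hkK
    by_contra hcon
    push_neg at hcon
    obtain ⟨h1, h2⟩ := hcon
    rw [hA, Finset.mem_filter, Finset.mem_range] at h1 h2
    have hk1 : xk k ∉ bdryAtoms S ε := by
      intro hmem; exact h1 ⟨by omega, hmem⟩
    have hk2 : xk (k+1) ∉ bdryAtoms S ε := by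
      intro hmem; exact h2 ⟨by omega, hmem⟩
    have hr := (hprop k (by omega) hk1).2 (by omega)
    have hl := (hprop (k+1) (by omega) hk2).1
    have hl2 : q (xk (k+1)) + 1/5 ≤ q (xk k) := by
      have he : k + 1 - 1 = k := rfl
      rw [he] at hl
      exact hl.2
    linarith only [hl2, hr]
  -- counting: at least K/2 + 1 atom slabs
  have hAcard : K/2 + 1 ≤ A.card := by
    have hinj := Finset.card_le_card_of_injOn
      (f := fun j => if j = 0 then 0 else if 2*j-1 ∈ A then 2*j-1 else 2*j)
      (s := Finset.range (K/2+1)) (t := A) ?_ ?_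
    · simpa using hinj
    · intro j hj
      simp only [Finset.mem_coe, Finset.mem_range] at hj
      by_cases hj0 : j = 0
      · simp [hj0, h0A]
      · have h2j : 2*j ≤ K := by omega
        have hp2 := hpairA (2*j-1) (by omega)
        by_cases hAm : 2*j-1 ∈ A
        · simp [hj0, hAm]
        · simp only [hj0, if_false, hAm]
          rcases hp2 with h | h
          · exact absurd h hAm
          · have he : 2*(j:ℕ)-1+1 = 2*j := by omega
            rw [he] at h; simpa using h
    · intro j hj j' hj' heq
      simp only at heq
      split_ifs at heq <;> omega
  -- injection from atom slabs into boundary atoms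
  have hBcard : A.card ≤ (bdryAtoms S ε).card := by
    refine Finset.card_le_card_of_injOn xk ?_ ?_
    · intro k hkA
      rw [hA, Finset.mem_coe, Finset.mem_filter] at hkA
      exact hkA.2
    · intro k hkA k' hkA' heq
      have hk1 : k ∈ Finset.range (K+1) := by
        have := Finset.mem_coe.mp hkA; rw [hA, Finset.mem_filter] at this; exact this.1
      have hk2 : k' ∈ Finset.range (K+1) := by
        have := Finset.mem_coe.mp hkA'; rw [hA, Finset.mem_filter] at this; exact this.1
      rw [Finset.mem_range] at hk1 hk2
      have h1 := (hxk k (by omega)).2.1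
      have h2 := (hxk k' (by omega)).2.1
      rw [heq] at h1
      omega
  -- final arithmetic
  have hDK : D < (11/10) * ((K:ℝ)+1) := by
    have h1 := Nat.lt_floor_add_one (D / (11/10))
    rw [← hK] at h1
    linarith only [h1]
  have hcards : (K/2 + 1 : ℕ) ≤ (bdryAtoms S ε).card := le_trans hAcard hBcard
  have hcastK : ((K:ℝ)+1) ≤ 2*((K/2 + 1 : ℕ) : ℝ) := by
    have h1 : K ≤ 2*(K/2)+1 := by omega
    have h2 : ((K:ℝ)) ≤ 2*((K/2 : ℕ):ℝ) + 1 := by exact_mod_cast h1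
    push_cast
    linarith
  have hcardR : ((K/2 + 1 : ℕ) : ℝ) ≤ ((bdryAtoms S ε).card : ℝ) := by exact_mod_cast hcards
  have hcpos : (0:ℝ) ≤ ((bdryAtoms S ε).card : ℝ) := by positivity
  nlinarith [hDK, hcastK, hcardR, hcpos, hpi3]
end
end
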